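/- arXiv:1806.11233 — 3 statements merged into one kernel-verified Lean document; each statement's English description precedes it below -/
import Mathlib

section
/- For a permutation $w \in S_\mathbb{Z}$, $w$ is 321-avoiding (there is no triple $i < j < k$ with $w(i) > w(j) > w(k)$) if and only if $w = w_\lambda w_\mu^{-1}$ for some partitions $\mu \subseteq \lambda$, where $w_\lambda$ is the 0-Grassmannian permutation associated to $\lambda$, defined by $w_\lambda(i) = i + \lambda_{1-i}$ for $i \le 0$ and $w_\lambda(i) = i - \lambda'_i$ for $i > 0$ (with $\lambda'$ the conjugate partition), and moreover $\ell(w_\lambda) = \ell(w_\lambda w_\mu^{-1}) + \ell(w_\mu)$. -/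
/-- A permutation of `ℤ` moves only finitely many elements. -/
def FinSupp (w : Equiv.Perm ℤ) : Prop := {i : ℤ | w i ≠ i}.Finite

/-- The Coxeter length of a permutation of `ℤ` = its number of inversions. -/
noncomputable def lenZ (w : Equiv.Perm ℤ) : ℕ :=
  Nat.card {p : ℤ × ℤ | p.1 < p.2 ∧ w p.2 < w p.1}

/-- A partition, recorded by its parts `λ_1 = l 0 ≥ λ_2 = l 1 ≥ ⋯`, eventually zero. -/
def IsPartition (l : ℕ → ℕ) : Prop :=
  (∀ n, l (n + 1) ≤ l n) ∧ ∃ N, ∀ n, N ≤ n → l n = 0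

/-- The conjugate partition: `λ'_k = #{j | λ_j ≥ k}` (parts of `l` indexed from 0). -/
noncomputable def conjPart (l : ℕ → ℕ) (k : ℕ) : ℕ := Nat.card {j : ℕ | k ≤ l j}

/-- `w` is the 0-Grassmannian permutation `w_λ` attached to the partition `l`:
`w_λ(i) = i + λ_{1-i}` for `i ≤ 0` and `w_λ(i) = i - λ'_i` for `i > 0`. -/
def IsGrassPerm (l : ℕ → ℕ) (w : Equiv.Perm ℤ) : Prop :=
  (∀ i : ℤ, i ≤ 0 → w i = i + l (-i).toNat) ∧
  (∀ i : ℤ, 0 < i → w i = i - conjPart l i.toNat)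

/-- `w` is 321-avoiding: no `i < j < k` with `w i > w j > w k`. -/
def Avoids321 (w : Equiv.Perm ℤ) : Prop :=
  ¬ ∃ i j k : ℤ, i < j ∧ j < k ∧ w k < w j ∧ w j < w i


open Finset


lemma finsupp_bound (w : Equiv.Perm ℤ) (hw : {i : ℤ | w i ≠ i}.Finite) :
    ∃ M : ℤ, 0 < M ∧ ∀ i, w i ≠ i → -M ≤ i ∧ i ≤ M := by
  obtain ⟨a, ha⟩ := hw.bddAbove
  obtain ⟨b, hb⟩ := hw.bddBelow
  refine ⟨max 1 (max |a| |b|), by positivity, fun i hi => ?_⟩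
  have h1 := ha hi
  have h2 := hb hi
  have h3 : |a| ≤ max 1 (max |a| |b|) := le_max_of_le_right (le_max_left _ _)
  have h4 : |b| ≤ max 1 (max |a| |b|) := le_max_of_le_right (le_max_right _ _)
  have h5 := abs_le.mp (le_refl |b|)
  have h6 := abs_le.mp (le_refl |a|)
  omega

-- support of inverse
lemma inv_supp (w : Equiv.Perm ℤ) (i : ℤ) (h : w⁻¹ i ≠ i) : w i ≠ i := by
  intro hc
  apply h
  have : w⁻¹ (w i) = w⁻¹ i := by rw [hc]
  simpa using this.symm

lemma out_fix (w : Equiv.Perm ℤ) (M : ℤ) (hM : ∀ i, w i ≠ i → -M ≤ i ∧ i ≤ M)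
    (i : ℤ) (h : i < -M ∨ M < i) : w i = i := by
  by_contra hc
  have := hM i hc
  omega

lemma out_fix_inv (w : Equiv.Perm ℤ) (M : ℤ) (hM : ∀ i, w i ≠ i → -M ≤ i ∧ i ≤ M)
    (i : ℤ) (h : i < -M ∨ M < i) : w⁻¹ i = i := by
  by_contra hc
  have := hM i (inv_supp w i hc)
  omega

lemma range_bound (w : Equiv.Perm ℤ) (M : ℤ) (hM : ∀ i, w i ≠ i → -M ≤ i ∧ i ≤ M)
    (x : ℤ) (hx1 : -M ≤ x) (hx2 : x ≤ M) : -M ≤ w x ∧ w x ≤ M := by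
  by_cases h : w x = x
  · omega
  · have hwx : w⁻¹ (w x) ≠ w x := by simpa using fun hc => h hc.symm
    exact hM (w x) (inv_supp w (w x) hwx)

lemma range_bound_inv (w : Equiv.Perm ℤ) (M : ℤ) (hM : ∀ i, w i ≠ i → -M ≤ i ∧ i ≤ M)
    (x : ℤ) (hx1 : -M ≤ x) (hx2 : x ≤ M) : -M ≤ w⁻¹ x ∧ w⁻¹ x ≤ M := by
  by_cases h : w⁻¹ x = x
  · omega
  · have h2 : w (w⁻¹ x) ≠ w⁻¹ x := by
      rw [Equiv.Perm.coe_inv, Equiv.apply_symm_apply]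
      exact fun hc => h hc.symm
    exact hM _ h2


lemma incr_weakexc (w : Equiv.Perm ℤ) (M : ℤ) (hM : ∀ i, w i ≠ i → -M ≤ i ∧ i ≤ M)
    (hav : Avoids321 w) {i j : ℤ} (hij : i < j) (hi : i ≤ w i) (hj : j ≤ w j) :
    w i < w j := by
  by_contra hlt
  have hne : w j ≠ w i := fun h => absurd (w.injective h) (by omega)
  have hji : w j < w i := lt_of_le_of_ne (not_lt.mp hlt) hne
  set L : ℤ := min i (-M) - 1 with hL
  have key : ∀ x ∈ Finset.Icc (L+1) (w j), w⁻¹ x ∈ (Finset.Icc (L+1) j).erase i := by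
    intro x hx
    simp only [Finset.mem_Icc] at hx
    have hwk : w (w⁻¹ x) = x := w.apply_symm_apply x
    have hkj : w⁻¹ x ≤ j := by
      by_contra hc
      push_neg at hc
      have h1 : w (w⁻¹ x) ≠ w j := fun hc2 => absurd (w.injective hc2) (by omega)
      exact hav ⟨i, j, w⁻¹ x, hij, hc, by omega, hji⟩
    have hkL : L + 1 ≤ w⁻¹ x := by
      by_cases hc : -M ≤ w⁻¹ x
      · omega
      · have : w (w⁻¹ x) = w⁻¹ x := out_fix w M hM _ (by omega)
        omega
    have hki : w⁻¹ x ≠ i := by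
      intro hc
      rw [hc] at hwk
      omega
    simp only [Finset.mem_erase, Finset.mem_Icc]
    exact ⟨hki, hkL, hkj⟩
  have hcard := Finset.card_le_card_of_injOn (w⁻¹ ·) key
    (Set.injOn_of_injective w⁻¹.injective)
  have hiI : i ∈ Finset.Icc (L+1) j := by simp only [Finset.mem_Icc]; omega
  rw [Finset.card_erase_of_mem hiI] at hcard
  rw [Int.card_Icc, Int.card_Icc] at hcard
  omega

lemma incr_weakanti (w : Equiv.Perm ℤ) (M : ℤ) (hM : ∀ i, w i ≠ i → -M ≤ i ∧ i ≤ M)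
    (hav : Avoids321 w) {i j : ℤ} (hij : i < j) (hi : w i ≤ i) (hj : w j ≤ j) :
    w i < w j := by
  by_contra hlt
  have hne : w j ≠ w i := fun h => absurd (w.injective h) (by omega)
  have hji : w j < w i := lt_of_le_of_ne (not_lt.mp hlt) hne
  set R : ℤ := max j M + 1 with hR
  have key : ∀ x ∈ Finset.Icc (w i) (R-1), w⁻¹ x ∈ (Finset.Icc i (R-1)).erase j := by
    intro x hx
    simp only [Finset.mem_Icc] at hx
    have hwk : w (w⁻¹ x) = x := w.apply_symm_apply x
    have hki : i ≤ w⁻¹ x := by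
      by_contra hc
      push_neg at hc
      exact hav ⟨w⁻¹ x, i, j, hc, hij, hji, by
        have h1 : w (w⁻¹ x) ≠ w i := fun hc2 => absurd (w.injective hc2) (by omega)
        omega⟩
    have hkR : w⁻¹ x ≤ R - 1 := by
      by_cases hc : w⁻¹ x ≤ M
      · omega
      · have : w (w⁻¹ x) = w⁻¹ x := out_fix w M hM _ (by omega)
        omega
    have hkj : w⁻¹ x ≠ j := by
      intro hc
      rw [hc] at hwk
      omega
    simp only [Finset.mem_erase, Finset.mem_Icc]
    exact ⟨hkj, hki, hkR⟩
  have hcard := Finset.card_le_card_of_injOn (w⁻¹ ·) key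
    (Set.injOn_of_injective w⁻¹.injective)
  have hjI : j ∈ Finset.Icc i (R-1) := by simp only [Finset.mem_Icc]; omega
  rw [Finset.card_erase_of_mem hjI] at hcard
  rw [Int.card_Icc, Int.card_Icc] at hcard
  omega

section G
variable (v : Equiv.Perm ℤ) (M : ℤ)
  (hM : ∀ i, v i ≠ i → -M ≤ i ∧ i ≤ M)
  (hneg : ∀ i j : ℤ, i < j → j ≤ 0 → v i < v j)
  (hpos : ∀ i j : ℤ, 0 < i → i < j → v i < v j)

include hneg in
lemma mono_nonpos : ∀ i j : ℤ, i ≤ j → j ≤ 0 → v i ≤ v j := by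
  intro i j h h0
  rcases eq_or_lt_of_le h with h | h
  · rw [h]
  · exact (hneg i j h h0).le

include hpos in
lemma mono_pos : ∀ i j : ℤ, 0 < i → i ≤ j → v i ≤ v j := by
  intro i j h0 h
  rcases eq_or_lt_of_le h with h | h
  · rw [h]
  · exact (hpos i j h0 h).le

include M hM in
lemma lo_bound : ∀ L z : ℤ, L ≤ -M - 1 → L + 1 ≤ z → L + 1 ≤ v z := by
  intro L z hLM hz
  by_cases hc : -M ≤ z
  · by_cases hc2 : z ≤ M
    · have := range_bound v M hM z hc hc2
      omega
    · have : v z = z := out_fix v M hM z (by omega)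
      omega
  · have : v z = z := out_fix v M hM z (by omega)
    omega

include M hM in
lemma lo_bound_inv : ∀ L z : ℤ, L ≤ -M - 1 → L + 1 ≤ z → L + 1 ≤ v⁻¹ z := by
  intro L z hLM hz
  by_cases hc : -M ≤ z
  · by_cases hc2 : z ≤ M
    · have := range_bound_inv v M hM z hc hc2
      omega
    · have : v⁻¹ z = z := out_fix_inv v M hM z (by omega)
      omega
  · have : v⁻¹ z = z := out_fix_inv v M hM z (by omega)
    omega

include M hM hneg in
lemma ge_id_nonpos : ∀ n : ℤ, n ≤ 0 → n ≤ v n := by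
  intro n hn
  set L : ℤ := min n (-M) - 1 with hL
  have key : ∀ x ∈ Finset.Icc (L+1) n, v x ∈ Finset.Icc (L+1) (v n) := by
    intro x hx
    simp only [Finset.mem_Icc] at hx ⊢
    exact ⟨lo_bound v M hM L x (by omega) hx.1, mono_nonpos v hneg x n hx.2 hn⟩
  have hcard := Finset.card_le_card_of_injOn (v ·) key
    (Set.injOn_of_injective v.injective)
  rw [Int.card_Icc, Int.card_Icc] at hcard
  omega

include M hM hneg hpos in
lemma count_C2 {i x : ℤ} (hi : 0 < i) (hx : x ≤ 0) (h : v i < v x) : i + x ≤ v x := by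
  set L : ℤ := min x (-M) - 1 with hL
  have key : ∀ y ∈ Finset.Icc (L+1) x ∪ Finset.Icc 1 i, v y ∈ Finset.Icc (L+1) (v x) := by
    intro y hy
    simp only [Finset.mem_union, Finset.mem_Icc] at hy ⊢
    rcases hy with hy | hy
    · exact ⟨lo_bound v M hM L y (by omega) hy.1, mono_nonpos v hneg y x hy.2 hx⟩
    · refine ⟨lo_bound v M hM L y (by omega) (by omega), ?_⟩
      have : v y ≤ v i := mono_pos v hpos y i hy.1 hy.2
      omega
  have hcard := Finset.card_le_card_of_injOn (v ·) key
    (Set.injOn_of_injective v.injective)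
  rw [Finset.card_union_of_disjoint (by
    simp only [Finset.disjoint_left, Finset.mem_Icc]
    intro a ha ha2
    omega)] at hcard
  rw [Int.card_Icc, Int.card_Icc, Int.card_Icc] at hcard
  omega

include M hM hneg hpos in
lemma count_C1 {i x : ℤ} (hi : 0 < i) (hx : x ≤ 0) (h : v x < v i) : v x - x < i := by
  set L : ℤ := min (v x) (min x (-M)) - 1 with hL
  have key : ∀ y ∈ Finset.Icc (L+1) (v x),
      v⁻¹ y ∈ Finset.Icc (L+1) x ∪ Finset.Icc 1 (i-1) := by
    intro y hy
    simp only [Finset.mem_Icc] at hy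
    have hvy : v (v⁻¹ y) = y := v.apply_symm_apply y
    simp only [Finset.mem_union, Finset.mem_Icc]
    by_cases hs : v⁻¹ y ≤ 0
    · left
      refine ⟨lo_bound_inv v M hM L y (by omega) hy.1, ?_⟩
      by_contra hc
      push_neg at hc
      have : v x < v (v⁻¹ y) := hneg x (v⁻¹ y) (by omega) hs
      omega
    · right
      push_neg at hs
      refine ⟨by omega, ?_⟩
      by_contra hc
      push_neg at hc
      have : v i ≤ v (v⁻¹ y) := mono_pos v hpos i (v⁻¹ y) hi (by omega)
      omega
  have hcard := Finset.card_le_card_of_injOn (v⁻¹ ·) key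
    (Set.injOn_of_injective v⁻¹.injective)
  rw [Finset.card_union_of_disjoint (by
    simp only [Finset.disjoint_left, Finset.mem_Icc]
    intro a ha ha2
    omega)] at hcard
  rw [Int.card_Icc, Int.card_Icc, Int.card_Icc] at hcard
  omega

include M hM hneg hpos in
lemma pos_formula (hMpos : 0 < M) {i : ℤ} (hi : 0 < i) :
    v i = i - conjPart (fun n => (v (-(n:ℤ)) + n).toNat) i.toNat := by
  set l : ℕ → ℕ := fun n => (v (-(n:ℤ)) + n).toNat with hldef
  set L : ℤ := min (-M) (-i) - 1 with hL
  set J₂ : Finset ℤ := (Finset.Icc (L+1) 0).filter (fun x => v i < v x) with hJ2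
  -- Step A: (J₂.card : ℤ) = i - v i
  have hvi_lb : L + 1 ≤ v i := lo_bound v M hM (L) i (by omega) (by omega)
  have hstepA : (J₂.card : ℤ) = i - v i := by
    set J : Finset ℤ := Finset.Icc (L+1) i with hJ
    set J₁ : Finset ℤ := J.filter (fun x => v x ≤ v i) with hJ1
    have h1 : J₁.card = (Finset.Icc (L+1) (v i)).card := by
      apply Finset.card_bij (fun a _ => v a)
      · intro a ha
        simp only [hJ1, hJ, Finset.mem_filter, Finset.mem_Icc] at ha
        simp only [Finset.mem_Icc]
        exact ⟨lo_bound v M hM L a (by omega) ha.1.1, ha.2⟩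
      · intro a ha b hb hab
        exact v.injective hab
      · intro y hy
        simp only [Finset.mem_Icc] at hy
        refine ⟨v⁻¹ y, ?_, v.apply_symm_apply y⟩
        have hvy : v (v⁻¹ y) = y := v.apply_symm_apply y
        simp only [hJ1, hJ, Finset.mem_filter, Finset.mem_Icc]
        refine ⟨⟨lo_bound_inv v M hM L y (by omega) hy.1, ?_⟩, by omega⟩
        by_contra hc
        push_neg at hc
        have : v i < v (v⁻¹ y) := hpos i (v⁻¹ y) hi hc
        omega
    have h2 : J.filter (fun x => ¬ (v x ≤ v i)) = J₂ := by
      apply Finset.ext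
      intro x
      simp only [hJ2, hJ, Finset.mem_filter, Finset.mem_Icc, not_le]
      constructor
      · rintro ⟨⟨hx1, hx2⟩, hx3⟩
        refine ⟨⟨hx1, ?_⟩, hx3⟩
        by_contra hc
        push_neg at hc
        have : v x ≤ v i := mono_pos v hpos x i hc hx2
        omega
      · rintro ⟨⟨hx1, hx2⟩, hx3⟩
        exact ⟨⟨hx1, by omega⟩, hx3⟩
    have h3 := Finset.card_filter_add_card_filter_not
      (s := J) (p := fun x => v x ≤ v i)
    rw [h1, h2] at h3
    have c1 := Int.card_Icc (L+1) (v i)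
    have c2 := Int.card_Icc (L+1) i
    simp only [hJ] at h3
    omega
  -- Step B: conjPart value
  have hinj : Function.Injective (fun n : ℕ => -(n : ℤ)) := by
    intro a b h
    simpa using h
  have himg : ((J₂ : Set ℤ)) = (fun n : ℕ => -(n:ℤ)) '' {n : ℕ | i.toNat ≤ l n} := by
    ext x
    simp only [hJ2, Finset.coe_filter, Set.mem_setOf_eq, Finset.mem_Icc, Set.mem_image]
    constructor
    · rintro ⟨⟨hx1, hx2⟩, hx3⟩
      refine ⟨(-x).toNat, ?_, by omega⟩
      have hc2 := count_C2 v M hM hneg hpos hi hx2 hx3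
      simp only [hldef, Set.mem_setOf_eq]
      have hxx : (-(((-x).toNat : ℕ) : ℤ)) = x := by omega
      rw [hxx]
      omega
    · rintro ⟨n, hn, hnx⟩
      simp only [hldef, Set.mem_setOf_eq] at hn
      have hv : i ≤ v (-(n:ℤ)) + n := by omega
      have hx0 : x ≤ 0 := by omega
      have hnn : -(n:ℤ) ≤ 0 := by omega
      have hgt : v i < v x := by
        rw [← hnx]
        by_contra hc
        push_neg at hc
        have hne : v (-(n:ℤ)) ≠ v i := fun hceq => by
          have := v.injective hceq
          omega
        have := count_C1 v M hM hneg hpos hi hnn (lt_of_le_of_ne hc hne)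
        omega
      refine ⟨⟨?_, hx0⟩, hgt⟩
      -- L + 1 ≤ x
      by_contra hc
      push_neg at hc
      have hfx : v x = x := out_fix v M hM x (by omega)
      have hvv : v (-(n:ℤ)) = v x := by rw [hnx]
      omega
  have hcount : (conjPart l i.toNat : ℤ) = (J₂.card : ℤ) := by
    have e1 : conjPart l i.toNat = Nat.card {n : ℕ | i.toNat ≤ l n} := rfl
    have e2 : Nat.card {n : ℕ | i.toNat ≤ l n} = ({n : ℕ | i.toNat ≤ l n}).ncard :=
      Nat.card_coe_set_eq _
    have e3 : ((fun n : ℕ => -(n:ℤ)) '' {n : ℕ | i.toNat ≤ l n}).ncard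
        = ({n : ℕ | i.toNat ≤ l n}).ncard := Set.ncard_image_of_injective _ hinj
    have e4 : ((J₂ : Set ℤ)).ncard = J₂.card := Set.ncard_coe_finset _
    rw [e1, e2, ← e3, ← himg, e4]
  omega


include M hM hneg hpos in
lemma grass_of_mono (hMpos : 0 < M) :
    IsPartition (fun n => (v (-(n:ℤ)) + n).toNat) ∧
    IsGrassPerm (fun n => (v (-(n:ℤ)) + n).toNat) v := by
  have hMt : (M.toNat : ℤ) = M := Int.toNat_of_nonneg hMpos.le
  constructor
  · constructor
    · intro n
      have h1 : v (-((n:ℤ)+1)) < v (-(n:ℤ)) := hneg _ _ (by omega) (by omega)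
      simp only []
      push_cast
      omega
    · refine ⟨M.toNat + 1, fun n hn => ?_⟩
      have h1 : v (-(n:ℤ)) = -(n:ℤ) := out_fix v M hM _ (by omega)
      simp only []
      omega
  · constructor
    · intro i hi
      have hgi := ge_id_nonpos v M hM hneg i hi
      have hxx : (-(((-i).toNat : ℕ) : ℤ)) = i := by omega
      simp only []
      rw [hxx]
      omega
    · intro i hi
      exact pos_formula v M hM hneg hpos hMpos hi

end G

lemma invset_subset (w : Equiv.Perm ℤ) (M : ℤ)
    (hM : ∀ i, w i ≠ i → -M ≤ i ∧ i ≤ M) :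
    {p : ℤ × ℤ | p.1 < p.2 ∧ w p.2 < w p.1} ⊆ (Set.Icc (-M) M) ×ˢ (Set.Icc (-M) M) := by
  rintro ⟨i, j⟩ ⟨hij, hw⟩
  dsimp only at hij hw
  simp only [Set.mem_prod, Set.mem_Icc]
  have fix : ∀ x : ℤ, ¬ (-M ≤ x ∧ x ≤ M) → w x = x := by
    intro x hx
    by_contra hc
    exact hx (hM x hc)
  have rng : ∀ x : ℤ, -M ≤ x → x ≤ M → -M ≤ w x ∧ w x ≤ M := by
    intro x h1 h2
    by_cases h : w x = x
    · omega
    · by_contra hc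
      have h2 : w (w x) = w x := fix (w x) hc
      have := w.injective h2
      omega
  constructor
  · -- bounds for i
    by_contra hc
    have hwi : w i = i := fix i hc
    rcases not_and_or.mp hc with hc1 | hc1
    · -- i < -M ; then w j < i < j
      by_cases hj : -M ≤ j ∧ j ≤ M
      · have := rng j hj.1 hj.2
        omega
      · have := fix j hj
        omega
    · -- M < i < j so j > M : w j = j > i
      have hwj : w j = j := fix j (by omega)
      omega
  · by_contra hc
    have hwj : w j = j := fix j hc
    rcases not_and_or.mp hc with hc1 | hc1
    · have hwi : w i = i := fix i (by omega)
      omega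
    · -- j > M, w i > w j = j > M
      by_cases hi : -M ≤ i ∧ i ≤ M
      · have := rng i hi.1 hi.2
        omega
      · have := fix i hi
        omega

lemma invset_finite (w : Equiv.Perm ℤ) (M : ℤ)
    (hM : ∀ i, w i ≠ i → -M ≤ i ∧ i ≤ M) :
    {p : ℤ × ℤ | p.1 < p.2 ∧ w p.2 < w p.1}.Finite :=
  Set.Finite.subset (Set.Finite.prod (Set.finite_Icc _ _) (Set.finite_Icc _ _))
    (invset_subset w M hM)

lemma len_add (u v : Equiv.Perm ℤ)
    (hu : {p : ℤ × ℤ | p.1 < p.2 ∧ u p.2 < u p.1}.Finite)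
    (hv : {p : ℤ × ℤ | p.1 < p.2 ∧ v p.2 < v p.1}.Finite)
    (hC : ∀ i j : ℤ, i < j → v j < v i → u (v j) < u (v i)) :
    lenZ (u * v) = lenZ u + lenZ v := by
  classical
  haveI := hu.to_subtype
  haveI := hv.to_subtype
  have e : {p : ℤ × ℤ | p.1 < p.2 ∧ (u * v) p.2 < (u * v) p.1} ≃
      ({p : ℤ × ℤ | p.1 < p.2 ∧ v p.2 < v p.1} ⊕ {p : ℤ × ℤ | p.1 < p.2 ∧ u p.2 < u p.1}) := by
    refine ⟨fun x => ?_, fun y => ?_, ?_, ?_⟩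
    · by_cases h : v x.1.2 < v x.1.1
      · exact Sum.inl ⟨x.1, ⟨x.2.1, h⟩⟩
      · refine Sum.inr ⟨(v x.1.1, v x.1.2), ⟨?_, ?_⟩⟩
        · have hne : v x.1.1 ≠ v x.1.2 := fun hc => by
            have h12 := x.2.1
            have := v.injective hc
            omega
          exact lt_of_le_of_ne (not_lt.mp h) hne
        · have := x.2.2
          simpa [Equiv.Perm.mul_apply] using this
    · rcases y with ⟨p, hp⟩ | ⟨p, hp⟩
      · refine ⟨p, ⟨hp.1, ?_⟩⟩
        have := hC p.1 p.2 hp.1 hp.2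
        simpa [Equiv.Perm.mul_apply] using this
      · refine ⟨(v⁻¹ p.1, v⁻¹ p.2), ⟨?_, ?_⟩⟩
        · by_contra hc
          push_neg at hc
          have hne : v⁻¹ p.1 ≠ v⁻¹ p.2 := fun h2 => (by have := hp.1; omega : p.1 ≠ p.2)
            (v⁻¹.injective h2)
          have hlt : v⁻¹ p.2 < v⁻¹ p.1 := lt_of_le_of_ne hc (Ne.symm hne)
          have := hC (v⁻¹ p.2) (v⁻¹ p.1) hlt (by
            simp only [Equiv.Perm.coe_inv, Equiv.apply_symm_apply]
            exact hp.1)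
          simp only [Equiv.Perm.coe_inv, Equiv.apply_symm_apply] at this
          have := hp.2
          omega
        · simp only [Equiv.Perm.mul_apply, Equiv.Perm.coe_inv, Equiv.apply_symm_apply]
          exact hp.2
    · intro x
      by_cases h : v x.1.2 < v x.1.1
      · simp only [dif_pos h]
      · simp only [dif_neg h]
        apply Subtype.ext
        simp only [Equiv.Perm.coe_inv, Equiv.symm_apply_apply]
    · intro y
      rcases y with ⟨p, hp⟩ | ⟨p, hp⟩
      · have : v p.2 < v p.1 := hp.2
        simp only [dif_pos this]
      · have hnot : ¬ v (v⁻¹ p.2) < v (v⁻¹ p.1) := by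
          simp only [Equiv.Perm.coe_inv, Equiv.apply_symm_apply]
          have := hp.1
          omega
        simp only [dif_neg hnot]
        congr 1
        apply Subtype.ext
        simp only [Equiv.Perm.coe_inv, Equiv.apply_symm_apply]
  calc lenZ (u * v) = Nat.card _ := rfl
    _ = Nat.card ({p : ℤ × ℤ | p.1 < p.2 ∧ v p.2 < v p.1}
        ⊕ {p : ℤ × ℤ | p.1 < p.2 ∧ u p.2 < u p.1}) := Nat.card_congr e
    _ = lenZ v + lenZ u := Nat.card_sum
    _ = lenZ u + lenZ v := by omega
lemma conjPart_le (l : ℕ → ℕ) (hl : IsPartition l) {k k' : ℕ} (hk : 1 ≤ k) (hkk : k ≤ k') :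
    conjPart l k' ≤ conjPart l k := by
  obtain ⟨N, hN⟩ := hl.2
  have hfin : {j : ℕ | k ≤ l j}.Finite := by
    apply Set.Finite.subset (Set.finite_Iio N)
    intro j hj
    simp only [Set.mem_setOf_eq] at hj
    simp only [Set.mem_Iio]
    by_contra hc
    have := hN j (by omega)
    omega
  have hsub : {j : ℕ | k' ≤ l j} ⊆ {j : ℕ | k ≤ l j} := fun j hj => le_trans hkk hj
  calc conjPart l k' = {j : ℕ | k' ≤ l j}.ncard := Nat.card_coe_set_eq _
    _ ≤ {j : ℕ | k ≤ l j}.ncard := Set.ncard_le_ncard hsub hfin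
    _ = conjPart l k := (Nat.card_coe_set_eq _).symm

lemma grass_mono_neg (l : ℕ → ℕ) (hl : IsPartition l) (w : Equiv.Perm ℤ)
    (hg : IsGrassPerm l w) : ∀ i j : ℤ, i < j → j ≤ 0 → w i < w j := by
  intro i j hij hj
  have anti : ∀ a b : ℕ, a ≤ b → l b ≤ l a := fun a b h =>
    (antitone_nat_of_succ_le hl.1) h
  have h1 := hg.1 i (by omega)
  have h2 := hg.1 j hj
  have h3 : l (-i).toNat ≤ l (-j).toNat := anti _ _ (by omega)
  omega

lemma grass_mono_pos (l : ℕ → ℕ) (hl : IsPartition l) (w : Equiv.Perm ℤ)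
    (hg : IsGrassPerm l w) : ∀ i j : ℤ, 0 < i → i < j → w i < w j := by
  intro i j hi hij
  have h1 := hg.2 i hi
  have h2 := hg.2 j (by omega)
  have h3 : conjPart l j.toNat ≤ conjPart l i.toNat :=
    conjPart_le l hl (by omega) (by omega)
  omega

lemma backward (w : Equiv.Perm ℤ) (l m : ℕ → ℕ) (wl wm : Equiv.Perm ℤ)
    (hl : IsPartition l) (hm : IsPartition m)
    (hgl : IsGrassPerm l wl) (hgm : IsGrassPerm m wm)
    (hfac : w = wl * wm⁻¹) : Avoids321 w := by
  rintro ⟨i, j, k, hij, hjk, h1, h2⟩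
  have wlneg := grass_mono_neg l hl wl hgl
  have wlpos := grass_mono_pos l hl wl hgl
  have wmneg := grass_mono_neg m hm wm hgm
  have wmpos := grass_mono_pos m hm wm hgm
  have wval : ∀ p : ℤ, w p = wl (wm⁻¹ p) := fun p => by rw [hfac]; rfl
  have pair : ∀ p q : ℤ, p < q → w q < w p →
      ((wm⁻¹ p ≤ 0 → ¬ wm⁻¹ q ≤ 0) ∧ (0 < wm⁻¹ p → ¬ 0 < wm⁻¹ q)) := by
    intro p q hpq hw
    have hinj : wm⁻¹ p ≠ wm⁻¹ q := fun h => by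
      have := (wm⁻¹ : Equiv.Perm ℤ).injective h
      omega
    constructor
    · intro hp hq
      rcases lt_or_gt_of_ne hinj with h | h
      · have hlt := wlneg _ _ h hq
        rw [← wval p, ← wval q] at hlt
        omega
      · have hlt : wm (wm⁻¹ q) < wm (wm⁻¹ p) := wmneg _ _ h hp
        simp only [Equiv.Perm.coe_inv, Equiv.apply_symm_apply] at hlt
        omega
    · intro hp hq
      rcases lt_or_gt_of_ne hinj with h | h
      · have hlt := wlpos _ _ hp h
        rw [← wval p, ← wval q] at hlt
        omega
      · have hlt : wm (wm⁻¹ q) < wm (wm⁻¹ p) := wmpos _ _ hq h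
        simp only [Equiv.Perm.coe_inv, Equiv.apply_symm_apply] at hlt
        omega
  have pij := pair i j hij h2
  have pjk := pair j k hjk h1
  have pik := pair i k (by omega) (by omega)
  by_cases hi : wm⁻¹ i ≤ 0 <;> by_cases hj : wm⁻¹ j ≤ 0 <;> by_cases hk : wm⁻¹ k ≤ 0 <;>
    [skip; skip; skip; skip; skip; skip; skip; skip] <;>
    first
      | exact pij.1 hi hj
      | exact pjk.1 hj hk
      | exact pik.1 hi hk
      | exact pij.2 (by omega) (by omega)
      | exact pjk.2 (by omega) (by omega)
      | exact pik.2 (by omega) (by omega)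

lemma bij_of_inj_finsupp (f : ℤ → ℤ) (hinj : Function.Injective f) (L R : ℤ)
    (hfix : ∀ x, x < L ∨ R < x → f x = x) : Function.Bijective f := by
  classical
  refine ⟨hinj, ?_⟩
  set S : Finset ℤ := (Finset.Icc L R).filter (fun x => f x ≠ x) with hS
  have hmapsto : ∀ x ∈ S, f x ∈ S := by
    intro x hx
    simp only [hS, Finset.mem_filter, Finset.mem_Icc] at hx
    have hfx : f (f x) ≠ f x := by
      intro hc
      exact hx.2 (hinj hc)
    simp only [hS, Finset.mem_filter, Finset.mem_Icc]
    refine ⟨?_, hfx⟩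
    by_contra hc
    have : f (f x) = f x := hfix (f x) (by omega)
    exact hfx this
  have hsurj := Finset.surj_on_of_inj_on_of_card_le (fun x _ => f x) hmapsto
    (fun a₁ a₂ _ _ h => hinj h) le_rfl
  intro y
  by_cases hy : y ∈ S
  · obtain ⟨x, _, hx⟩ := hsurj y hy
    exact ⟨x, hx.symm⟩
  · simp only [hS, Finset.mem_filter, Finset.mem_Icc, not_and, not_not] at hy
    by_cases hyin : L ≤ y ∧ y ≤ R
    · exact ⟨y, by tauto⟩
    · exact ⟨y, hfix y (by omega)⟩

section GG
variable (A : Set ℤ) [DecidablePred (· ∈ A)] (L1 R1 : ℤ)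

noncomputable def gfun : ℤ → ℤ := fun x =>
  if x ∈ A then -(((Finset.Ioc x R1).filter (· ∈ A)).card : ℤ)
  else (((Finset.Ioo L1 x).filter (· ∉ A)).card + 1 : ℤ)

variable (hL1 : L1 ≤ -1) (hR1 : 0 ≤ R1)
  (hA3 : ∀ i : ℤ, i ≤ L1 → i ∈ A)
  (hA4 : ∀ i : ℤ, R1 < i → i ∉ A)
  (hbal : ((Finset.Ioc 0 R1).filter (· ∈ A)).card
        = ((Finset.Ioc L1 0).filter (· ∉ A)).card)

include hA4 in
lemma gfun_monoA {x y : ℤ} (hx : x ∈ A) (hy : y ∈ A) (hxy : x < y) :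
    gfun A L1 R1 x < gfun A L1 R1 y := by
  simp only [gfun, if_pos hx, if_pos hy]
  have hcard : ((Finset.Ioc y R1).filter (· ∈ A)).card
      < ((Finset.Ioc x R1).filter (· ∈ A)).card := by
    apply Finset.card_lt_card
    constructor
    · intro z hz
      simp only [Finset.mem_filter, Finset.mem_Ioc] at hz ⊢
      exact ⟨⟨by omega, hz.1.2⟩, hz.2⟩
    · intro hsub
      have hyR : y ≤ R1 := by
        by_contra hc
        exact hA4 y (by omega) hy
      have hymem : y ∈ (Finset.Ioc x R1).filter (· ∈ A) := by
        simp only [Finset.mem_filter, Finset.mem_Ioc]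
        exact ⟨⟨hxy, hyR⟩, hy⟩
      have := hsub hymem
      simp only [Finset.mem_filter, Finset.mem_Ioc] at this
      omega
  omega

include hA3 in
lemma gfun_monoB {x y : ℤ} (hx : x ∉ A) (hy : y ∉ A) (hxy : x < y) :
    gfun A L1 R1 x < gfun A L1 R1 y := by
  simp only [gfun, if_neg hx, if_neg hy]
  have hcard : ((Finset.Ioo L1 x).filter (· ∉ A)).card
      < ((Finset.Ioo L1 y).filter (· ∉ A)).card := by
    apply Finset.card_lt_card
    constructor
    · intro z hz
      simp only [Finset.mem_filter, Finset.mem_Ioo] at hz ⊢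
      exact ⟨⟨hz.1.1, by omega⟩, hz.2⟩
    · intro hsub
      have hxL : L1 < x := by
        by_contra hc
        exact hx (hA3 x (by omega))
      have hxmem : x ∈ (Finset.Ioo L1 y).filter (· ∉ A) := by
        simp only [Finset.mem_filter, Finset.mem_Ioo]
        exact ⟨⟨hxL, hxy⟩, hx⟩
      have := hsub hxmem
      simp only [Finset.mem_filter, Finset.mem_Ioo] at this
      omega
  omega

lemma gfun_sign : ∀ x, (x ∈ A → gfun A L1 R1 x ≤ 0) ∧ (x ∉ A → 1 ≤ gfun A L1 R1 x) := by
  intro x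
  constructor
  · intro hx
    simp only [gfun, if_pos hx]
    omega
  · intro hx
    simp only [gfun, if_neg hx]
    omega

include hA3 hA4 in
lemma gfun_inj : Function.Injective (gfun A L1 R1) := by
  intro x y hxy
  by_contra hne
  rcases lt_or_gt_of_ne hne with h | h
  · by_cases hx : x ∈ A <;> by_cases hy : y ∈ A
    · have := gfun_monoA A L1 R1 hA4 hx hy h
      omega
    · have h1 := (gfun_sign A L1 R1 x).1 hx
      have h2 := (gfun_sign A L1 R1 y).2 hy
      omega
    · have h1 := (gfun_sign A L1 R1 x).2 hx
      have h2 := (gfun_sign A L1 R1 y).1 hy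
      omega
    · have := gfun_monoB A L1 R1 hA3 hx hy h
      omega
  · by_cases hx : x ∈ A <;> by_cases hy : y ∈ A
    · have := gfun_monoA A L1 R1 hA4 hy hx h
      omega
    · have h1 := (gfun_sign A L1 R1 x).1 hx
      have h2 := (gfun_sign A L1 R1 y).2 hy
      omega
    · have h1 := (gfun_sign A L1 R1 x).2 hx
      have h2 := (gfun_sign A L1 R1 y).1 hy
      omega
    · have := gfun_monoB A L1 R1 hA3 hy hx h
      omega

include hL1 hR1 hA3 hA4 hbal in
lemma gfun_fix_lo : ∀ x, x ≤ L1 → gfun A L1 R1 x = x := by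
  intro x hx
  have hxA : x ∈ A := hA3 x hx
  simp only [gfun, if_pos hxA]
  have hsplit : Finset.Ioc x R1 = Finset.Ioc x L1 ∪ Finset.Ioc L1 R1 := by
    apply Finset.ext
    intro z
    simp only [Finset.mem_union, Finset.mem_Ioc]
    omega
  have hdisj : Disjoint ((Finset.Ioc x L1).filter (· ∈ A)) ((Finset.Ioc L1 R1).filter (· ∈ A)) := by
    simp only [Finset.disjoint_left, Finset.mem_filter, Finset.mem_Ioc]
    intro a ha ha2
    omega
  have h1 : ((Finset.Ioc x L1).filter (· ∈ A)) = Finset.Ioc x L1 := by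
    apply Finset.filter_true_of_mem
    intro z hz
    simp only [Finset.mem_Ioc] at hz
    exact hA3 z hz.2
  have hsplit2 : Finset.Ioc L1 R1 = Finset.Ioc L1 0 ∪ Finset.Ioc 0 R1 := by
    apply Finset.ext
    intro z
    simp only [Finset.mem_union, Finset.mem_Ioc]
    omega
  have hdisj2 : Disjoint ((Finset.Ioc L1 0).filter (· ∈ A)) ((Finset.Ioc 0 R1).filter (· ∈ A)) := by
    simp only [Finset.disjoint_left, Finset.mem_filter, Finset.mem_Ioc]
    intro a ha ha2
    omega
  have hcompl := Finset.card_filter_add_card_filter_not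
    (s := Finset.Ioc L1 0) (p := (· ∈ A))
  have c1 := Int.card_Ioc x L1
  have c2 := Int.card_Ioc L1 (0 : ℤ)
  have e1 : ((Finset.Ioc x R1).filter (· ∈ A)).card
      = ((Finset.Ioc x L1).filter (· ∈ A)).card + ((Finset.Ioc L1 R1).filter (· ∈ A)).card := by
    rw [hsplit, Finset.filter_union, Finset.card_union_of_disjoint hdisj]
  have e2 : ((Finset.Ioc L1 R1).filter (· ∈ A)).card
      = ((Finset.Ioc L1 0).filter (· ∈ A)).card + ((Finset.Ioc 0 R1).filter (· ∈ A)).card := by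
    rw [hsplit2, Finset.filter_union, Finset.card_union_of_disjoint hdisj2]
  rw [e1, e2, h1, hbal]
  omega

include hL1 hR1 hA3 hA4 hbal in
lemma gfun_fix_hi : ∀ x, R1 < x → gfun A L1 R1 x = x := by
  intro x hx
  have hxA : x ∉ A := hA4 x hx
  simp only [gfun, if_neg hxA]
  have hsplit : Finset.Ioo L1 x = Finset.Ioc L1 0 ∪ Finset.Ioc 0 (x-1) := by
    apply Finset.ext
    intro z
    simp only [Finset.mem_union, Finset.mem_Ioc, Finset.mem_Ioo]
    omega
  have hdisj : Disjoint ((Finset.Ioc L1 0).filter (· ∉ A)) ((Finset.Ioc 0 (x-1)).filter (· ∉ A)) := by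
    simp only [Finset.disjoint_left, Finset.mem_filter, Finset.mem_Ioc]
    intro a ha ha2
    omega
  have hwin : ((Finset.Ioc 0 (x-1)).filter (· ∈ A)) = ((Finset.Ioc 0 R1).filter (· ∈ A)) := by
    apply Finset.ext
    intro z
    simp only [Finset.mem_filter, Finset.mem_Ioc]
    constructor
    · rintro ⟨⟨h1, h2⟩, h3⟩
      refine ⟨⟨h1, ?_⟩, h3⟩
      by_contra hc
      exact hA4 z (by omega) h3
    · rintro ⟨⟨h1, h2⟩, h3⟩
      exact ⟨⟨h1, by omega⟩, h3⟩
  have hcompl := Finset.card_filter_add_card_filter_not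
    (s := Finset.Ioc 0 (x-1)) (p := (· ∈ A))
  have c2 := Int.card_Ioc (0:ℤ) (x-1)
  have e1 : ((Finset.Ioo L1 x).filter (· ∉ A)).card
      = ((Finset.Ioc L1 0).filter (· ∉ A)).card + ((Finset.Ioc 0 (x-1)).filter (· ∉ A)).card := by
    rw [hsplit, Finset.filter_union, Finset.card_union_of_disjoint hdisj]
  rw [e1, ← hbal]
  rw [hwin] at hcompl
  have : ((Finset.Ioc 0 (x - 1)).filter (fun a => ¬ a ∈ A)).card
      = ((Finset.Ioc 0 (x-1)).filter (· ∉ A)).card := rfl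
  omega

end GG

lemma int_ivt (f : ℤ → ℤ) (p q : ℤ) (hpq : p ≤ q) (hp : f p < 0) (hq : 0 ≤ f q)
    (hstep : ∀ c, p ≤ c → c < q → f c ≤ f (c+1) ∧ f (c+1) ≤ f c + 1) :
    ∃ c, p ≤ c ∧ c ≤ q ∧ f c = 0 := by
  classical
  set S : Finset ℤ := (Finset.Icc p q).filter (fun c => f c < 0) with hS
  have hne : S.Nonempty := ⟨p, by
    simp only [hS, Finset.mem_filter, Finset.mem_Icc]
    exact ⟨⟨le_refl p, hpq⟩, hp⟩⟩
  set c := S.max' hne with hc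
  have hcS : c ∈ S := S.max'_mem hne
  simp only [hS, Finset.mem_filter, Finset.mem_Icc] at hcS
  have hcq : c < q := by
    rcases eq_or_lt_of_le hcS.1.2 with h | h
    · rw [h] at hcS
      omega
    · exact h
  have hnot : c + 1 ∉ S := fun h => by
    have := S.le_max' _ h
    omega
  have hge : ¬ (f (c+1) < 0) := fun h => hnot (by
    simp only [hS, Finset.mem_filter, Finset.mem_Icc]
    exact ⟨⟨by omega, by omega⟩, h⟩)
  have hstep' := hstep c hcS.1.1 hcq
  exact ⟨c+1, by omega, by omega, by omega⟩

theorem forward (w : Equiv.Perm ℤ) (hw : {i : ℤ | w i ≠ i}.Finite) (hav : Avoids321 w) :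
    ∃ (l m : ℕ → ℕ) (wl wm : Equiv.Perm ℤ),
      IsPartition l ∧ IsPartition m ∧ (∀ n, m n ≤ l n) ∧
      IsGrassPerm l wl ∧ IsGrassPerm m wm ∧
      w = wl * wm⁻¹ ∧ lenZ wl = lenZ w + lenZ wm := by
  classical
  obtain ⟨M, hMpos, hM⟩ := finsupp_bound w hw
  set cHi : ℤ := 3*M+3 with hcHi
  set cLo : ℤ := -(3*M+3) with hcLo
  set P : ℤ → ℤ → Prop := fun c i => i < w i ∨ (w i = i ∧ i ≤ c) with hP
  set F : ℤ → ℤ := fun c =>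
    ((((Finset.Ioc 0 cHi).filter (fun i => P c i)).card : ℤ)
      - (((Finset.Ioc cLo 0).filter (fun i => ¬ P c i)).card : ℤ)) with hF
  -- endpoint: F cLo < 0
  have hFlo : F cLo < 0 := by
    have ha : ((Finset.Ioc 0 cHi).filter (fun i => P cLo i)).card ≤ (Finset.Ioc (0:ℤ) M).card := by
      apply Finset.card_le_card
      intro i hi
      simp only [Finset.mem_filter, Finset.mem_Ioc, hP] at hi ⊢
      rcases hi.2 with h | h
      · exact ⟨hi.1.1, (hM i (by omega)).2⟩
      · omega
    have hb : (Finset.Ioc cLo (-M-1)).card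
        ≤ ((Finset.Ioc cLo 0).filter (fun i => ¬ P cLo i)).card := by
      apply Finset.card_le_card
      intro i hi
      simp only [Finset.mem_Ioc] at hi
      have hfix : w i = i := by
        by_contra hc
        have := hM i hc
        omega
      simp only [Finset.mem_filter, Finset.mem_Ioc, hP]
      constructor
      · omega
      · push_neg
        constructor
        · omega
        · intro _
          omega
    have c1 := Int.card_Ioc (0:ℤ) M
    have c2 := Int.card_Ioc cLo (-M-1)
    simp only [hF]
    omega
  -- endpoint: 0 ≤ F cHi
  have hFhi : 0 ≤ F cHi := by
    have ha : (Finset.Ioc M cHi).card ≤ ((Finset.Ioc 0 cHi).filter (fun i => P cHi i)).card := by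
      apply Finset.card_le_card
      intro i hi
      simp only [Finset.mem_Ioc] at hi
      have hfix : w i = i := by
        by_contra hc
        have := hM i hc
        omega
      simp only [Finset.mem_filter, Finset.mem_Ioc, hP]
      exact ⟨⟨by omega, hi.2⟩, Or.inr ⟨hfix, hi.2⟩⟩
    have hb : ((Finset.Ioc cLo 0).filter (fun i => ¬ P cHi i)).card
        ≤ (Finset.Ioc (-M-1) (0:ℤ)).card := by
      apply Finset.card_le_card
      intro i hi
      simp only [Finset.mem_filter, Finset.mem_Ioc, hP] at hi
      push_neg at hi
      simp only [Finset.mem_Ioc]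
      refine ⟨?_, hi.1.2⟩
      by_contra hc
      have hfix : w i = i := by
        by_contra hc2
        have := hM i hc2
        omega
      have := hi.2.2 hfix
      omega
    have c1 := Int.card_Ioc M cHi
    have c2 := Int.card_Ioc (-M-1) (0:ℤ)
    simp only [hF]
    omega
  -- step property
  have hstep : ∀ c : ℤ, cLo ≤ c → c < cHi → F c ≤ F (c+1) ∧ F (c+1) ≤ F c + 1 := by
    intro c hc1 hc2
    set Sa := (Finset.Ioc 0 cHi).filter (fun i => P c i) with hSa
    set Sa' := (Finset.Ioc 0 cHi).filter (fun i => P (c+1) i) with hSa'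
    set Sb := (Finset.Ioc cLo 0).filter (fun i => ¬ P c i) with hSb
    set Sb' := (Finset.Ioc cLo 0).filter (fun i => ¬ P (c+1) i) with hSb'
    have hPmono : ∀ i, P c i → P (c+1) i := by
      intro i hi
      simp only [hP] at hi ⊢
      rcases hi with h | h
      · exact Or.inl h
      · exact Or.inr ⟨h.1, by omega⟩
    have hasub : Sa ⊆ Sa' := by
      intro i hi
      simp only [hSa, Finset.mem_filter] at hi
      simp only [hSa', Finset.mem_filter]
      exact ⟨hi.1, hPmono i hi.2⟩
    have hbsub : Sb' ⊆ Sb := by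
      intro i hi
      simp only [hSb', Finset.mem_filter] at hi
      simp only [hSb, Finset.mem_filter]
      exact ⟨hi.1, fun h => hi.2 (hPmono i h)⟩
    have hadiff : Sa' ⊆ Sa ∪ {c+1} := by
      intro i hi
      simp only [hSa', Finset.mem_filter, hP, Finset.mem_Ioc] at hi
      simp only [Finset.mem_union, hSa, Finset.mem_filter, hP, Finset.mem_Ioc,
        Finset.mem_singleton]
      rcases hi.2 with h | h
      · exact Or.inl ⟨hi.1, Or.inl h⟩
      · by_cases hieq : i = c + 1
        · exact Or.inr hieq
        · exact Or.inl ⟨hi.1, Or.inr ⟨h.1, by omega⟩⟩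
    have hbdiff : Sb ⊆ Sb' ∪ {c+1} := by
      intro i hi
      simp only [hSb, Finset.mem_filter, hP, Finset.mem_Ioc] at hi
      simp only [Finset.mem_union, hSb', Finset.mem_filter, hP, Finset.mem_Ioc,
        Finset.mem_singleton]
      by_cases hieq : i = c + 1
      · exact Or.inr hieq
      · refine Or.inl ⟨hi.1, ?_⟩
        intro hcon
        apply hi.2
        rcases hcon with h | h
        · exact Or.inl h
        · exact Or.inr ⟨h.1, by omega⟩
    have hcard1 : Sa.card ≤ Sa'.card := Finset.card_le_card hasub
    have hcard2 : Sb'.card ≤ Sb.card := Finset.card_le_card hbsub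
    have hcard3 : Sa'.card ≤ Sa.card + 1 := by
      calc Sa'.card ≤ (Sa ∪ {c+1}).card := Finset.card_le_card hadiff
        _ ≤ Sa.card + ({c+1} : Finset ℤ).card := Finset.card_union_le _ _
        _ = Sa.card + 1 := by simp
    have hcard4 : Sb.card ≤ Sb'.card + 1 := by
      calc Sb.card ≤ (Sb' ∪ {c+1}).card := Finset.card_le_card hbdiff
        _ ≤ Sb'.card + ({c+1} : Finset ℤ).card := Finset.card_union_le _ _
        _ = Sb'.card + 1 := by simp
    -- not both change
    have hexcl : Sa'.card = Sa.card + 1 → Sb.card = Sb'.card + 1 → False := by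
      intro h1 h2
      have hA : ∃ i ∈ Sa', i ∉ Sa := by
        by_contra hc
        push_neg at hc
        have : Sa' ⊆ Sa := hc
        have := Finset.card_le_card this
        omega
      have hB : ∃ i ∈ Sb, i ∉ Sb' := by
        by_contra hc
        push_neg at hc
        have : Sb ⊆ Sb' := hc
        have := Finset.card_le_card this
        omega
      obtain ⟨i1, hi1, hi1'⟩ := hA
      obtain ⟨i2, hi2, hi2'⟩ := hB
      have e1 : i1 = c + 1 := by
        have := hadiff hi1
        simp only [Finset.mem_union, Finset.mem_singleton] at this
        tauto
      have e2 : i2 = c + 1 := by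
        have := hbdiff hi2
        simp only [Finset.mem_union, Finset.mem_singleton] at this
        tauto
      have m1 : 0 < i1 := by
        simp only [hSa', Finset.mem_filter, Finset.mem_Ioc] at hi1
        exact hi1.1.1
      have m2 : i2 ≤ 0 := by
        simp only [hSb, Finset.mem_filter, Finset.mem_Ioc] at hi2
        exact hi2.1.2
      omega
    have eqc : F c = ((Sa.card : ℤ) - Sb.card) := by simp only [hF, hSa, hSb]
    have eqc1 : F (c+1) = ((Sa'.card : ℤ) - Sb'.card) := by simp only [hF, hSa', hSb']
    constructor
    · rw [eqc, eqc1]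
      by_cases h1 : Sa'.card = Sa.card + 1
      · have h2 : Sb.card = Sb'.card := by
          rcases eq_or_lt_of_le hcard2 with h | h
          · exact h.symm
          · exfalso
            exact hexcl h1 (by omega)
        omega
      · have h2 : Sb.card ≤ Sb'.card + 1 := hcard4
        omega
    · rw [eqc, eqc1]
      by_cases h1 : Sb.card = Sb'.card + 1
      · have h2 : Sa'.card = Sa.card := by
          rcases eq_or_lt_of_le hcard1 with h | h
          · exact h.symm
          · exfalso
            exact hexcl (by omega) h1
        omega
      · omega
  obtain ⟨c, hc1, hc2, hc0⟩ := int_ivt F cLo cHi (by omega) hFlo hFhi hstep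
  -- the set A and its properties
  set A : Set ℤ := {i | P c i} with hA
  haveI : DecidablePred (· ∈ A) := Classical.decPred _
  set L1 : ℤ := min (-M-1) c with hL1def
  set R1 : ℤ := max M c with hR1def
  have hL1 : L1 ≤ -1 := by omega
  have hR1 : 0 ≤ R1 := by omega
  have hA3 : ∀ i : ℤ, i ≤ L1 → i ∈ A := by
    intro i hi
    have hfix : w i = i := by
      by_contra hc'
      have := hM i hc'
      omega
    simp only [hA, Set.mem_setOf_eq, hP]
    exact Or.inr ⟨hfix, by omega⟩
  have hA4 : ∀ i : ℤ, R1 < i → i ∉ A := by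
    intro i hi hmem
    simp only [hA, Set.mem_setOf_eq, hP] at hmem
    have hfix : w i = i := by
      by_contra hc'
      have := hM i hc'
      omega
    omega
  have hAweak : ∀ i : ℤ, i ∈ A → i ≤ w i := by
    intro i hi
    simp only [hA, Set.mem_setOf_eq, hP] at hi
    omega
  have hBweak : ∀ i : ℤ, i ∉ A → w i ≤ i := by
    intro i hi
    simp only [hA, Set.mem_setOf_eq, hP] at hi
    push_neg at hi
    omega
  have hbal : ((Finset.Ioc 0 R1).filter (· ∈ A)).card
      = ((Finset.Ioc L1 0).filter (· ∉ A)).card := by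
    have h1 : ((Finset.Ioc 0 R1).filter (· ∈ A))
        = ((Finset.Ioc 0 cHi).filter (fun i => P c i)) := by
      apply Finset.ext
      intro i
      simp only [Finset.mem_filter, Finset.mem_Ioc, hA, Set.mem_setOf_eq]
      constructor
      · rintro ⟨⟨a1, a2⟩, a3⟩
        exact ⟨⟨a1, by omega⟩, a3⟩
      · rintro ⟨⟨a1, a2⟩, a3⟩
        refine ⟨⟨a1, ?_⟩, a3⟩
        rcases a3 with h | h
        · have := hM i (by omega)
          omega
        · omega
    have h2 : ((Finset.Ioc L1 0).filter (· ∉ A))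
        = ((Finset.Ioc cLo 0).filter (fun i => ¬ P c i)) := by
      apply Finset.ext
      intro i
      simp only [Finset.mem_filter, Finset.mem_Ioc, hA, Set.mem_setOf_eq]
      constructor
      · rintro ⟨⟨a1, a2⟩, a3⟩
        exact ⟨⟨by omega, a2⟩, a3⟩
      · rintro ⟨⟨a1, a2⟩, a3⟩
        refine ⟨⟨?_, a2⟩, a3⟩
        by_contra hcon
        push_neg at hcon
        have hfix : w i = i := by
          by_contra hc'
          have := hM i hc'
          omega
        exact a3 (Or.inr ⟨hfix, by omega⟩)
    have hFc := hc0
    simp only [hF] at hFc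
    rw [h1, h2]
    omega
  -- the permutation wm
  have hginj : Function.Injective (gfun A L1 R1) := gfun_inj A L1 R1 hA3 hA4
  have hgfixlo := gfun_fix_lo A L1 R1 hL1 hR1 hA3 hA4 hbal
  have hgfixhi := gfun_fix_hi A L1 R1 hL1 hR1 hA3 hA4 hbal
  have hgbij : Function.Bijective (gfun A L1 R1) := by
    apply bij_of_inj_finsupp _ hginj (L1+1) R1
    intro x hx
    rcases hx with h | h
    · exact hgfixlo x (by omega)
    · exact hgfixhi x h
  set e : ℤ ≃ ℤ := Equiv.ofBijective (gfun A L1 R1) hgbij with he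
  set wm : Equiv.Perm ℤ := e.symm with hwm
  have hgwm : ∀ i, gfun A L1 R1 (wm i) = i := fun i => e.apply_symm_apply i
  have hsign1 : ∀ x, x ∈ A → gfun A L1 R1 x ≤ 0 := fun x hx => (gfun_sign A L1 R1 x).1 hx
  have hsign2 : ∀ x, x ∉ A → 1 ≤ gfun A L1 R1 x := fun x hx => (gfun_sign A L1 R1 x).2 hx
  have hwmmem : ∀ i : ℤ, wm i ∈ A ↔ i ≤ 0 := by
    intro i
    have e1 := hgwm i
    constructor
    · intro h
      have := hsign1 _ h
      omega
    · intro h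
      by_contra hc
      have := hsign2 _ hc
      omega
  have hwmneg : ∀ i j : ℤ, i < j → j ≤ 0 → wm i < wm j := by
    intro i j hij hj
    have hi' : wm i ∈ A := (hwmmem i).2 (by omega)
    have hj' : wm j ∈ A := (hwmmem j).2 hj
    rcases lt_trichotomy (wm i) (wm j) with h | h | h
    · exact h
    · exact absurd (wm.injective h) (by omega)
    · exfalso
      have hmono := gfun_monoA A L1 R1 hA4 hj' hi' h
      have e1 := hgwm i
      have e2 := hgwm j
      omega
  have hwmpos : ∀ i j : ℤ, 0 < i → i < j → wm i < wm j := by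
    intro i j hi hij
    have hi' : wm i ∉ A := fun h => by
      have := (hwmmem i).1 h
      omega
    have hj' : wm j ∉ A := fun h => by
      have := (hwmmem j).1 h
      omega
    rcases lt_trichotomy (wm i) (wm j) with h | h | h
    · exact h
    · exact absurd (wm.injective h) (by omega)
    · exfalso
      have hmono := gfun_monoB A L1 R1 hA3 hj' hi' h
      have e1 := hgwm i
      have e2 := hgwm j
      omega
  have hMm : ∀ i, wm i ≠ i → -(3*M+4) ≤ i ∧ i ≤ 3*M+4 := by
    intro i hi
    have hgi : gfun A L1 R1 i ≠ i := by
      intro hc'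
      apply hi
      apply hginj
      rw [hgwm i, hc']
    have h1 : ¬ i ≤ L1 := fun h => hgi (hgfixlo i h)
    have h2 : ¬ R1 < i := fun h => hgi (hgfixhi i h)
    omega
  set wl : Equiv.Perm ℤ := w * wm with hwl
  have hwlval : ∀ i, wl i = w (wm i) := fun i => rfl
  have hMl : ∀ i, wl i ≠ i → -(3*M+4) ≤ i ∧ i ≤ 3*M+4 := by
    intro i hi
    by_cases h1 : wm i = i
    · have h2 : wl i = w i := by rw [hwlval i, h1]
      have hwi : w i ≠ i := by
        rw [← h2]
        exact hi
      have := hM i hwi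
      omega
    · exact hMm i h1
  have hwlneg : ∀ i j : ℤ, i < j → j ≤ 0 → wl i < wl j := by
    intro i j hij hj
    have h1 := hwmneg i j hij hj
    have hi' : wm i ∈ A := (hwmmem i).2 (by omega)
    have hj' : wm j ∈ A := (hwmmem j).2 hj
    have h2 := incr_weakexc w M hM hav h1 (hAweak _ hi') (hAweak _ hj')
    rw [hwlval i, hwlval j]
    exact h2
  have hwlpos : ∀ i j : ℤ, 0 < i → i < j → wl i < wl j := by
    intro i j hi hij
    have h1 := hwmpos i j hi hij
    have hi' : wm i ∉ A := fun h => by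
      have := (hwmmem i).1 h
      omega
    have hj' : wm j ∉ A := fun h => by
      have := (hwmmem j).1 h
      omega
    have h2 := incr_weakanti w M hM hav h1 (hBweak _ hi') (hBweak _ hj')
    rw [hwlval i, hwlval j]
    exact h2
  obtain ⟨hpart_m, hgrass_m⟩ := grass_of_mono wm (3*M+4) hMm hwmneg hwmpos (by omega)
  obtain ⟨hpart_l, hgrass_l⟩ := grass_of_mono wl (3*M+4) hMl hwlneg hwlpos (by omega)
  refine ⟨fun n => (wl (-(n:ℤ)) + n).toNat, fun n => (wm (-(n:ℤ)) + n).toNat, wl, wm,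
    hpart_l, hpart_m, ?_, hgrass_l, hgrass_m, ?_, ?_⟩
  · intro n
    have hmem : wm (-(n:ℤ)) ∈ A := (hwmmem _).2 (by omega)
    have h1 := hAweak _ hmem
    have h2 := hwlval (-(n:ℤ))
    beta_reduce
    omega
  · rw [hwl]
    exact (mul_inv_cancel_right w wm).symm
  · have hC : ∀ i j : ℤ, i < j → wm j < wm i → w (wm j) < w (wm i) := by
      intro i j hij hlt
      by_cases hj : j ≤ 0
      · exfalso
        have := hwmneg i j hij hj
        omega
      · by_cases hi : 0 < i
        · exfalso
          have := hwmpos i j hi hij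
          omega
        · push_neg at hi
          have hiA : wm i ∈ A := (hwmmem i).2 hi
          have hjA : wm j ∉ A := fun h => by
            have := (hwmmem j).1 h
            omega
          have h1 := hAweak _ hiA
          have h2 := hBweak _ hjA
          omega
    have hlen := len_add w wm (invset_finite w M hM) (invset_finite wm (3*M+4) hMm) hC
    rw [hwl]
    exact hlen


/-- A finitely supported permutation `w` of `ℤ` is 321-avoiding iff
`w = w_λ * w_μ⁻¹` for partitions `μ ⊆ λ`, with `ℓ(w_λ) = ℓ(w_λ w_μ⁻¹) + ℓ(w_μ)`. -/
theorem avoids321_iff_skew (w : Equiv.Perm ℤ) (hw : FinSupp w) :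
    Avoids321 w ↔
      ∃ (l m : ℕ → ℕ) (wl wm : Equiv.Perm ℤ),
        IsPartition l ∧ IsPartition m ∧ (∀ n, m n ≤ l n) ∧
        IsGrassPerm l wl ∧ IsGrassPerm m wm ∧
        w = wl * wm⁻¹ ∧ lenZ wl = lenZ w + lenZ wm := by
  constructor
  · intro hav
    exact forward w hw hav
  · rintro ⟨l, m, wl, wm, hl, hm, _, hgl, hgm, hfac, _⟩
    exact backward w l m wl wm hl hm hgl hgm hfac
end

section
/- The map $w \mapsto (I_{w,+}, I_{w,-})$, where $I_{w,+} = \mathbb{Z}_{>0} \cap w(\mathbb{Z}_{\le 0})$ and $I_{w,-} = \mathbb{Z}_{\le 0} \cap w(\mathbb{Z}_{>0})$, is a bijection from the set of 0-Grassmannian permutations of $\mathbb{Z}$ to the set of pairs of finite sets $(I_+, I_-)$ with $I_+ \subset \mathbb{Z}_{>0}$, $I_- \subset \mathbb{Z}_{\le 0}$ and $|I_+| = |I_-|$. -/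
/-- `w` is 0-Grassmannian: `ℓ(w s_i) > ℓ(w)` for all `i ≠ 0`. -/
def IsZeroGrassmannian (w : Equiv.Perm ℤ) : Prop :=
  ∀ i : ℤ, i ≠ 0 → lenZ w < lenZ (w * Equiv.swap i (i + 1))

/-- `I_{w,+} = ℤ_{>0} ∩ w(ℤ_{≤0})`. -/
def Iplus (w : Equiv.Perm ℤ) : Set ℤ := {i : ℤ | 0 < i ∧ w.symm i ≤ 0}

/-- `I_{w,-} = ℤ_{≤0} ∩ w(ℤ_{>0})`. -/
def Iminus (w : Equiv.Perm ℤ) : Set ℤ := {i : ℤ | i ≤ 0 ∧ 0 < w.symm i}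

/-! ### auxiliary -/

def invSet (w : Equiv.Perm ℤ) : Set (ℤ × ℤ) := {p : ℤ × ℤ | p.1 < p.2 ∧ w p.2 < w p.1}

lemma lenZ_eq (w : Equiv.Perm ℤ) : lenZ w = (invSet w).ncard :=
  Nat.card_coe_set_eq _

lemma exists_bound {w : Equiv.Perm ℤ} (hw : FinSupp w) :
    ∃ N : ℤ, 0 ≤ N ∧ ∀ x : ℤ, w x ≠ x → -N ≤ x ∧ x ≤ N := by
  obtain ⟨u, hu⟩ := hw.bddAbove
  obtain ⟨l, hl⟩ := hw.bddBelow
  refine ⟨max 0 (max u (-l)), le_max_left _ _, fun x hx => ?_⟩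
  have h1 : x ≤ u := hu hx
  have h2 : l ≤ x := hl hx
  have h3 : u ≤ max 0 (max u (-l)) := le_trans (le_max_left u (-l)) (le_max_right _ _)
  have h4 : -l ≤ max 0 (max u (-l)) := le_trans (le_max_right u (-l)) (le_max_right _ _)
  omega

lemma supp_closed {w : Equiv.Perm ℤ} {N : ℤ} (hN : ∀ x : ℤ, w x ≠ x → -N ≤ x ∧ x ≤ N)
    {a : ℤ} (ha1 : -N ≤ a) (ha2 : a ≤ N) : -N ≤ w a ∧ w a ≤ N := by
  by_cases h : w a = a
  · rw [h]; exact ⟨ha1, ha2⟩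
  · exact hN _ (fun hh => h (w.injective hh))

lemma invSet_finite {w : Equiv.Perm ℤ} (hw : FinSupp w) : (invSet w).Finite := by
  obtain ⟨N, hN0, hN⟩ := exists_bound hw
  apply Set.Finite.subset ((Set.finite_Icc (-N) N).prod (Set.finite_Icc (-N) N))
  rintro ⟨a, b⟩ ⟨hab, hw2⟩
  dsimp only at hab hw2
  simp only [Set.mem_prod, Set.mem_Icc]
  by_cases ha : w a = a <;> by_cases hb : w b = b
  · rw [ha, hb] at hw2; omega
  · have h1 := hN b hb
    have h2 := supp_closed hN h1.1 h1.2
    rw [ha] at hw2; omega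
  · have h1 := hN a ha
    have h2 := supp_closed hN h1.1 h1.2
    rw [hb] at hw2; omega
  · exact ⟨hN a ha, hN b hb⟩

lemma finSupp_mul {u v : Equiv.Perm ℤ} (hu : FinSupp u) (hv : FinSupp v) : FinSupp (u * v) := by
  apply (hu.union hv).subset
  intro x hx
  by_contra h
  simp only [Set.mem_union, Set.mem_setOf_eq, not_or, not_not] at h
  exact hx (by simp [Equiv.Perm.mul_apply, h.2, h.1])

lemma finSupp_swap (i j : ℤ) : FinSupp (Equiv.swap i j) := by
  apply ((Set.finite_singleton j).insert i).subset
  intro x hx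
  by_contra h
  simp only [Set.mem_insert_iff, Set.mem_singleton_iff, not_or] at h
  exact hx (Equiv.swap_apply_of_ne_of_ne h.1 h.2)

lemma lenZ_lt_of_lt {w : Equiv.Perm ℤ} (hw : FinSupp w) {i : ℤ} (h : w i < w (i + 1)) :
    lenZ w < lenZ (w * Equiv.swap i (i + 1)) := by
  set s := Equiv.swap i (i + 1) with hs
  have hws : FinSupp (w * s) := finSupp_mul hw (finSupp_swap _ _)
  have hfin' := invSet_finite hws
  have hmem : ((i, i + 1) : ℤ × ℤ) ∈ invSet (w * s) := by
    refine ⟨by omega, ?_⟩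
    simp only [Equiv.Perm.mul_apply, hs, Equiv.swap_apply_left, Equiv.swap_apply_right]
    exact h
  have hmap : (fun p : ℤ × ℤ => (s p.1, s p.2)) '' invSet w ⊆ invSet (w * s) \ {(i, i + 1)} := by
    rintro _ ⟨⟨a, b⟩, ⟨hab, hinv⟩, rfl⟩
    have hne : ¬(a = i ∧ b = i + 1) := by
      rintro ⟨rfl, rfl⟩; exact absurd hinv (not_lt.2 h.le)
    have hlt : s a < s b := by
      simp only [hs, Equiv.swap_apply_def]
      split_ifs <;> omega
    refine ⟨⟨hlt, ?_⟩, ?_⟩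
    · simpa only [hs, Equiv.Perm.mul_apply, Equiv.swap_apply_self] using hinv
    · simp only [Set.mem_singleton_iff, Prod.mk.injEq, not_and]
      intro h1 h2
      simp only [hs, Equiv.swap_apply_def] at h1 h2
      split_ifs at h1 h2 <;> omega
  have hinj : Function.Injective (fun p : ℤ × ℤ => (s p.1, s p.2)) := by
    intro p q hpq
    simp only [Prod.mk.injEq] at hpq
    exact Prod.ext (s.injective hpq.1) (s.injective hpq.2)
  calc lenZ w = (invSet w).ncard := lenZ_eq w
    _ = ((fun p : ℤ × ℤ => (s p.1, s p.2)) '' invSet w).ncard :=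
        (Set.ncard_image_of_injective _ hinj).symm
    _ ≤ (invSet (w * s) \ {(i, i + 1)}).ncard :=
        Set.ncard_le_ncard hmap hfin'.diff
    _ < (invSet (w * s)).ncard := Set.ncard_diff_singleton_lt_of_mem hmem hfin'
    _ = lenZ (w * s) := (lenZ_eq _).symm

lemma isZG_iff {w : Equiv.Perm ℤ} (hw : FinSupp w) :
    IsZeroGrassmannian w ↔ ∀ i : ℤ, i ≠ 0 → w i < w (i + 1) := by
  constructor
  · intro hG i hi
    rcases lt_trichotomy (w i) (w (i + 1)) with h | h | h
    · exact h
    · exact absurd (w.injective h) (by omega)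
    · exfalso
      have hws : FinSupp (w * Equiv.swap i (i + 1)) := finSupp_mul hw (finSupp_swap _ _)
      have h2 : (w * Equiv.swap i (i + 1)) i < (w * Equiv.swap i (i + 1)) (i + 1) := by
        simpa [Equiv.Perm.mul_apply] using h
      have h3 := lenZ_lt_of_lt hws h2
      rw [mul_assoc, Equiv.swap_mul_self, mul_one] at h3
      exact absurd (hG i hi) (by omega)
  · intro h i hi
    exact lenZ_lt_of_lt hw (h i hi)

lemma mono_neg {w : Equiv.Perm ℤ} (hst : ∀ i : ℤ, i ≠ 0 → w i < w (i + 1)) :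
    ∀ a b : ℤ, a < b → b ≤ 0 → w a < w b := by
  intro a b hab hb
  have key : ∀ c : ℤ, a + 1 ≤ c → c ≤ 0 → w a < w c := by
    refine Int.le_induction ?_ ?_
    · intro h0; exact hst a (by omega)
    · intro n hn ih hh0
      have hh1 := ih (by omega)
      have hh2 := hst n (by omega)
      omega
  exact key b (by omega) hb

lemma mono_pos_s3 {w : Equiv.Perm ℤ} (hst : ∀ i : ℤ, i ≠ 0 → w i < w (i + 1)) :
    ∀ a b : ℤ, 1 ≤ a → a < b → w a < w b := by
  intro a b ha hab
  have key : ∀ c : ℤ, a + 1 ≤ c → w a < w c := by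
    refine Int.le_induction ?_ ?_
    · exact hst a (by omega)
    · intro n hn ih
      have h2 := hst n (by omega)
      omega
  exact key b (by omega)
lemma iplus_eq {w : Equiv.Perm ℤ} {N : ℤ} (hN0 : 0 ≤ N)
    (hN : ∀ x : ℤ, w x ≠ x → -N ≤ x ∧ x ≤ N) :
    Iplus w = (w '' Set.Icc (-N) 0) \ Set.Icc (-N) 0 := by
  ext i
  simp only [Iplus, Set.mem_setOf_eq, Set.mem_diff, Set.mem_image, Set.mem_Icc]
  constructor
  · rintro ⟨hi, hsym⟩
    have hj : w (w.symm i) = i := w.apply_symm_apply i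
    have hjN : -N ≤ w.symm i := by
      by_contra hc
      have : w (w.symm i) = w.symm i := by
        by_contra hc2
        have := hN _ hc2; omega
      omega
    exact ⟨⟨w.symm i, ⟨hjN, hsym⟩, hj⟩, by omega⟩
  · rintro ⟨⟨j, ⟨hj1, hj2⟩, rfl⟩, hni⟩
    have hsym : w.symm (w j) = j := w.symm_apply_apply j
    refine ⟨?_, by omega⟩
    by_contra hc
    push_neg at hc
    have hwj : w j ≠ j := by omega
    have := (supp_closed hN hj1 (by omega)).1
    omega

lemma iminus_eq {w : Equiv.Perm ℤ} {N : ℤ} (hN0 : 0 ≤ N)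
    (hN : ∀ x : ℤ, w x ≠ x → -N ≤ x ∧ x ≤ N) :
    Iminus w = Set.Icc (-N) 0 \ (w '' Set.Icc (-N) 0) := by
  ext i
  simp only [Iminus, Set.mem_setOf_eq, Set.mem_diff, Set.mem_image, Set.mem_Icc]
  constructor
  · rintro ⟨hi, hsym⟩
    have hiN : -N ≤ i := by
      by_contra hc
      have hwi : w i = i := by
        by_contra hc2
        have := hN _ hc2; omega
      have : w.symm i = i := by rw [Equiv.symm_apply_eq, hwi]
      omega
    refine ⟨⟨hiN, hi⟩, ?_⟩
    rintro ⟨j, ⟨hj1, hj2⟩, rfl⟩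
    have : w.symm (w j) = j := w.symm_apply_apply j
    omega
  · rintro ⟨⟨hi1, hi2⟩, hni⟩
    refine ⟨hi2, ?_⟩
    by_contra hc
    push_neg at hc
    have hj : w (w.symm i) = i := w.apply_symm_apply i
    have hjN : -N ≤ w.symm i := by
      by_contra hc2
      have : w (w.symm i) = w.symm i := by
        by_contra hc3
        have := hN _ hc3; omega
      omega
    exact hni ⟨w.symm i, ⟨hjN, hc⟩, hj⟩

lemma card_iplus_eq_iminus {w : Equiv.Perm ℤ} (hw : FinSupp w) :
    (Iplus w).Finite ∧ (Iminus w).Finite ∧ Nat.card (Iplus w) = Nat.card (Iminus w) := by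
  obtain ⟨N, hN0, hN⟩ := exists_bound hw
  have hC : (Set.Icc (-N) (0:ℤ)).Finite := Set.finite_Icc _ _
  have hI : (w '' Set.Icc (-N) (0:ℤ)).Finite := hC.image w
  rw [iplus_eq hN0 hN, iminus_eq hN0 hN]
  refine ⟨hI.diff, hC.diff, ?_⟩
  rw [Nat.card_coe_set_eq, Nat.card_coe_set_eq]
  have e1 := Set.ncard_inter_add_ncard_diff_eq_ncard (w '' Set.Icc (-N) 0) (Set.Icc (-N) 0) hI
  have e2 := Set.ncard_inter_add_ncard_diff_eq_ncard (Set.Icc (-N) (0:ℤ)) (w '' Set.Icc (-N) 0) hC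
  have e3 : (w '' Set.Icc (-N) (0:ℤ)).ncard = (Set.Icc (-N) (0:ℤ)).ncard :=
    Set.ncard_image_of_injective _ w.injective
  have e4 : ((w '' Set.Icc (-N) (0:ℤ)) ∩ Set.Icc (-N) 0).ncard
      = (Set.Icc (-N) (0:ℤ) ∩ (w '' Set.Icc (-N) 0)).ncard := by rw [Set.inter_comm]
  omega

lemma symm_nonpos_iff (w : Equiv.Perm ℤ) (x : ℤ) :
    w.symm x ≤ 0 ↔ ((x ≤ 0 ∧ x ∉ Iminus w) ∨ (0 < x ∧ x ∈ Iplus w)) := by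
  simp only [Iplus, Iminus, Set.mem_setOf_eq]
  omega

lemma aux_neg {w w' : Equiv.Perm ℤ}
    (hst : ∀ i : ℤ, i ≠ 0 → w i < w (i + 1))
    (himg : ∀ x : ℤ, w.symm x ≤ 0 ↔ w'.symm x ≤ 0)
    {m : ℤ} (hm0 : m ≤ 0) (hmax : ∀ k : ℤ, k ≤ 0 → w k ≠ w' k → k ≤ m)
    (hlt : w m < w' m) : False := by
  have h1 : w.symm (w' m) ≤ 0 := by
    rw [himg, w'.symm_apply_apply]; exact hm0
  have hj : w (w.symm (w' m)) = w' m := w.apply_symm_apply _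
  set j := w.symm (w' m) with hjdef
  have hjm : m < j := by
    rcases lt_trichotomy j m with hc | hc | hc
    · have := mono_neg hst j m hc hm0; omega
    · rw [hc] at hj; omega
    · exact hc
  have heq : w j = w' j := by
    by_contra hne
    have := hmax j h1 hne; omega
  have : j = m := w'.injective (heq ▸ hj)
  omega

lemma aux_pos {w w' : Equiv.Perm ℤ}
    (hst' : ∀ i : ℤ, i ≠ 0 → w' i < w' (i + 1))
    (himg : ∀ x : ℤ, w.symm x ≤ 0 ↔ w'.symm x ≤ 0)
    {m : ℤ} (hm1 : 1 ≤ m) (hmin : ∀ k : ℤ, 1 ≤ k → w k ≠ w' k → m ≤ k)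
    (hlt : w m < w' m) : False := by
  have h1 : 1 ≤ w'.symm (w m) := by
    by_contra hc
    push_neg at hc
    have h2 : w'.symm (w m) ≤ 0 := by omega
    rw [← himg, w.symm_apply_apply] at h2
    omega
  have hj : w' (w'.symm (w m)) = w m := w'.apply_symm_apply _
  set j := w'.symm (w m) with hjdef
  have hjm : j < m := by
    rcases lt_trichotomy j m with hc | hc | hc
    · exact hc
    · rw [hc] at hj; omega
    · have := mono_pos_s3 hst' m j hm1 hc; omega
  have heq : w j = w' j := by
    by_contra hne
    have := hmin j h1 hne; omega
  have : j = m := w.injective (by rw [heq, hj])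
  omega

lemma eq_of_same_sets {w w' : Equiv.Perm ℤ} (hw : FinSupp w) (hw' : FinSupp w')
    (hG : IsZeroGrassmannian w) (hG' : IsZeroGrassmannian w')
    (hp : Iplus w = Iplus w') (hm : Iminus w = Iminus w') : w = w' := by
  have hst := (isZG_iff hw).1 hG
  have hst' := (isZG_iff hw').1 hG'
  have himg : ∀ x : ℤ, w.symm x ≤ 0 ↔ w'.symm x ≤ 0 := by
    intro x
    rw [symm_nonpos_iff, symm_nonpos_iff, hp, hm]
  have himg' : ∀ x : ℤ, w'.symm x ≤ 0 ↔ w.symm x ≤ 0 := fun x => (himg x).symm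
  obtain ⟨N, hN0, hN⟩ := exists_bound hw
  obtain ⟨N', hN0', hN'⟩ := exists_bound hw'
  -- negative side
  have hDneg : ∀ k : ℤ, k ≤ 0 → w k = w' k := by
    by_contra hc
    push_neg at hc
    set D : Set ℤ := {k : ℤ | k ≤ 0 ∧ w k ≠ w' k} with hD
    have hDfin : D.Finite := by
      apply (Set.finite_Icc (-(max N N')) (0:ℤ)).subset
      rintro k ⟨hk0, hkne⟩
      simp only [Set.mem_Icc]
      refine ⟨?_, hk0⟩
      by_contra hcc
      push_neg at hcc
      have h1 : w k = k := by
        by_contra h2; have := hN _ h2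
        have := le_max_left N N'; omega
      have h2 : w' k = k := by
        by_contra h2; have := hN' _ h2
        have := le_max_right N N'; omega
      rw [h1, h2] at hkne; exact hkne rfl
    obtain ⟨k₀, hk₀⟩ := hc
    have hne : hDfin.toFinset.Nonempty := ⟨k₀, by simp [hD, hk₀.1, hk₀.2]⟩
    set m := hDfin.toFinset.max' hne with hmdef
    have hmD : m ∈ D := by
      have := hDfin.toFinset.max'_mem hne
      rwa [Set.Finite.mem_toFinset] at this
    have hmax : ∀ k : ℤ, k ≤ 0 → w k ≠ w' k → k ≤ m := by
      intro k h1 h2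
      exact hDfin.toFinset.le_max' k (by rw [Set.Finite.mem_toFinset]; exact ⟨h1, h2⟩)
    have hmax' : ∀ k : ℤ, k ≤ 0 → w' k ≠ w k → k ≤ m := fun k h1 h2 => hmax k h1 (Ne.symm h2)
    rcases lt_trichotomy (w m) (w' m) with hcc | hcc | hcc
    · exact aux_neg hst himg hmD.1 hmax hcc
    · exact hmD.2 hcc
    · exact aux_neg hst' himg' hmD.1 hmax' hcc
  -- positive side
  have hEpos : ∀ k : ℤ, 1 ≤ k → w k = w' k := by
    by_contra hc
    push_neg at hc
    set E : Set ℤ := {k : ℤ | 1 ≤ k ∧ w k ≠ w' k} with hE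
    have hEfin : E.Finite := by
      apply (Set.finite_Icc (1:ℤ) (max N N')).subset
      rintro k ⟨hk0, hkne⟩
      simp only [Set.mem_Icc]
      refine ⟨hk0, ?_⟩
      by_contra hcc
      push_neg at hcc
      have h1 : w k = k := by
        by_contra h2; have := hN _ h2
        have := le_max_left N N'; omega
      have h2 : w' k = k := by
        by_contra h2; have := hN' _ h2
        have := le_max_right N N'; omega
      rw [h1, h2] at hkne; exact hkne rfl
    obtain ⟨k₀, hk₀⟩ := hc
    have hne : hEfin.toFinset.Nonempty := ⟨k₀, by simp [hE, hk₀.1, hk₀.2]⟩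
    set m := hEfin.toFinset.min' hne with hmdef
    have hmE : m ∈ E := by
      have := hEfin.toFinset.min'_mem hne
      rwa [Set.Finite.mem_toFinset] at this
    have hmin : ∀ k : ℤ, 1 ≤ k → w k ≠ w' k → m ≤ k := by
      intro k h1 h2
      exact hEfin.toFinset.min'_le k (by rw [Set.Finite.mem_toFinset]; exact ⟨h1, h2⟩)
    have hmin' : ∀ k : ℤ, 1 ≤ k → w' k ≠ w k → m ≤ k := fun k h1 h2 => hmin k h1 (Ne.symm h2)
    rcases lt_trichotomy (w m) (w' m) with hcc | hcc | hcc
    · exact aux_pos hst' himg hmE.1 hmin hcc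
    · exact hmE.2 hcc
    · exact aux_pos hst himg' hmE.1 hmin' hcc
  ext k
  rcases le_or_gt k 0 with h | h
  · exact hDneg k h
  · exact hEpos k (by omega)
lemma exists_perm (Ip Im : Set ℤ) (hpos : ∀ i ∈ Ip, 0 < i) (hneg : ∀ i ∈ Im, i ≤ 0)
    (hfp : Ip.Finite) (hfm : Im.Finite) (hcard : Nat.card Ip = Nat.card Im) :
    ∃ w : Equiv.Perm ℤ, FinSupp w ∧ IsZeroGrassmannian w ∧ Iplus w = Ip ∧ Iminus w = Im := by
  classical
  obtain ⟨u, hu⟩ := hfp.bddAbove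
  obtain ⟨l, hl⟩ := hfm.bddBelow
  set N : ℤ := max 1 (max u (-l)) with hNdef
  have hN1 : 1 ≤ N := le_max_left _ _
  have hIpN : ∀ i ∈ Ip, i ≤ N := fun i hi =>
    le_trans (hu hi) (le_trans (le_max_left u (-l)) (le_max_right _ _))
  have hImN : ∀ i ∈ Im, -N ≤ i := by
    intro i hi
    have h1 : l ≤ i := hl hi
    have h2 : -l ≤ N := le_trans (le_max_right u (-l)) (le_max_right _ _)
    omega
  set P : Finset ℤ := hfp.toFinset with hPdef
  set M : Finset ℤ := hfm.toFinset with hMdef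
  have hPiff : ∀ y : ℤ, y ∈ P ↔ y ∈ Ip := fun y => Set.Finite.mem_toFinset _
  have hMiff : ∀ y : ℤ, y ∈ M ↔ y ∈ Im := fun y => Set.Finite.mem_toFinset _
  set C : Finset ℤ := Finset.Icc (-N) 0 with hCdef
  set D : Finset ℤ := Finset.Icc 1 N with hDdef
  have hCmem : ∀ x : ℤ, x ∈ C ↔ (-N ≤ x ∧ x ≤ 0) := by
    intro x; rw [hCdef, Finset.mem_Icc]
  have hDmem : ∀ x : ℤ, x ∈ D ↔ (1 ≤ x ∧ x ≤ N) := by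
    intro x; rw [hDdef, Finset.mem_Icc]
  have hMC : M ⊆ C := by
    intro i hi
    rw [hMiff] at hi
    rw [hCmem]
    exact ⟨hImN i hi, hneg i hi⟩
  have hPD : P ⊆ D := by
    intro i hi
    rw [hPiff] at hi
    rw [hDmem]
    exact ⟨hpos i hi, hIpN i hi⟩
  set A : Finset ℤ := (C \ M) ∪ P with hAdef
  set B : Finset ℤ := (D \ P) ∪ M with hBdef
  have hAmem : ∀ y : ℤ, y ∈ A ↔ ((y ∈ C ∧ y ∉ M) ∨ y ∈ P) := by
    intro y; rw [hAdef, Finset.mem_union, Finset.mem_sdiff]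
  have hBmem : ∀ y : ℤ, y ∈ B ↔ ((y ∈ D ∧ y ∉ P) ∨ y ∈ M) := by
    intro y; rw [hBdef, Finset.mem_union, Finset.mem_sdiff]
  have hAB : ∀ y : ℤ, y ∈ A → y ∈ B → False := by
    intro y hyA hyB
    rw [hAmem] at hyA; rw [hBmem] at hyB
    rcases hyA with ⟨hC1, hM1⟩ | hP1 <;> rcases hyB with ⟨hD1, hP2⟩ | hM2
    · rw [hCmem] at hC1; rw [hDmem] at hD1; omega
    · exact hM1 hM2
    · exact hP2 hP1
    · rw [hPiff] at hP1; rw [hMiff] at hM2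
      have := hpos _ hP1; have := hneg _ hM2; omega
  have hPMcard : P.card = M.card := by
    have e1 : Nat.card Ip = Ip.ncard := Nat.card_coe_set_eq _
    have e2 : Nat.card Im = Im.ncard := Nat.card_coe_set_eq _
    have e3 : Ip.ncard = P.card := Set.ncard_eq_toFinset_card _ hfp
    have e4 : Im.ncard = M.card := Set.ncard_eq_toFinset_card _ hfm
    omega
  have hdisj1 : Disjoint (C \ M) P := by
    rw [Finset.disjoint_left]
    intro a ha hb
    rw [Finset.mem_sdiff] at ha
    rw [hCmem] at ha
    rw [hPiff] at hb
    have := hpos _ hb; omega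
  have hdisj2 : Disjoint (D \ P) M := by
    rw [Finset.disjoint_left]
    intro a ha hb
    rw [Finset.mem_sdiff] at ha
    rw [hDmem] at ha
    rw [hMiff] at hb
    have := hneg _ hb; omega
  have hMleC : M.card ≤ C.card := Finset.card_le_card hMC
  have hPleD : P.card ≤ D.card := Finset.card_le_card hPD
  have hAcard : A.card = C.card := by
    rw [hAdef, Finset.card_union_of_disjoint hdisj1, Finset.card_sdiff_of_subset hMC]
    omega
  have hBcard : B.card = D.card := by
    rw [hBdef, Finset.card_union_of_disjoint hdisj2, Finset.card_sdiff_of_subset hPD]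
    omega
  set e₁ : {x // x ∈ C} ≃o {x // x ∈ A} :=
    (C.orderIsoOfFin rfl).symm.trans (A.orderIsoOfFin hAcard) with he₁
  set e₂ : {x // x ∈ D} ≃o {x // x ∈ B} :=
    (D.orderIsoOfFin rfl).symm.trans (B.orderIsoOfFin hBcard) with he₂
  have hAbd : ∀ y ∈ A, -N ≤ y ∧ y ≤ N := by
    intro y hy
    rw [hAmem] at hy
    rcases hy with ⟨h1, _⟩ | h1
    · rw [hCmem] at h1; omega
    · have := hPD h1; rw [hDmem] at this; omega
  have hBbd : ∀ y ∈ B, -N ≤ y ∧ y ≤ N := by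
    intro y hy
    rw [hBmem] at hy
    rcases hy with ⟨h1, _⟩ | h1
    · rw [hDmem] at h1; omega
    · have := hMC h1; rw [hCmem] at this; omega
  set f : ℤ → ℤ := fun x =>
    if hx : x ∈ C then ((e₁ ⟨x, hx⟩ : {y // y ∈ A}) : ℤ)
    else if hx' : x ∈ D then ((e₂ ⟨x, hx'⟩ : {y // y ∈ B}) : ℤ) else x with hfdef
  set g : ℤ → ℤ := fun y =>
    if hy : y ∈ A then ((e₁.symm ⟨y, hy⟩ : {x // x ∈ C}) : ℤ)
    else if hy' : y ∈ B then ((e₂.symm ⟨y, hy'⟩ : {x // x ∈ D}) : ℤ) else y with hgdef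
  have hfC : ∀ (x : ℤ) (hx : x ∈ C), f x = ((e₁ ⟨x, hx⟩ : {y // y ∈ A}) : ℤ) := by
    intro x hx; rw [hfdef]; exact dif_pos hx
  have hfD : ∀ (x : ℤ), x ∉ C → ∀ (hx' : x ∈ D), f x = ((e₂ ⟨x, hx'⟩ : {y // y ∈ B}) : ℤ) := by
    intro x hx hx'; rw [hfdef]; simp only; rw [dif_neg hx, dif_pos hx']
  have hfid : ∀ x : ℤ, x ∉ C → x ∉ D → f x = x := by
    intro x hx hx'; rw [hfdef]; simp only; rw [dif_neg hx, dif_neg hx']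
  have hgA : ∀ (y : ℤ) (hy : y ∈ A), g y = ((e₁.symm ⟨y, hy⟩ : {x // x ∈ C}) : ℤ) := by
    intro y hy; rw [hgdef]; exact dif_pos hy
  have hgB : ∀ (y : ℤ), y ∉ A → ∀ (hy' : y ∈ B), g y = ((e₂.symm ⟨y, hy'⟩ : {x // x ∈ D}) : ℤ) := by
    intro y hy hy'; rw [hgdef]; simp only; rw [dif_neg hy, dif_pos hy']
  have hgid : ∀ y : ℤ, y ∉ A → y ∉ B → g y = y := by
    intro y hy hy'; rw [hgdef]; simp only; rw [dif_neg hy, dif_neg hy']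
  have hCD : ∀ z : ℤ, z ∈ C → z ∈ D → False := by
    intro z h1 h2; rw [hCmem] at h1; rw [hDmem] at h2; omega
  have hgf : ∀ x : ℤ, g (f x) = x := by
    intro x
    by_cases hx : x ∈ C
    · rw [hfC x hx]
      have hmem : ((e₁ ⟨x, hx⟩ : {y // y ∈ A}) : ℤ) ∈ A := (e₁ ⟨x, hx⟩).2
      rw [hgA _ hmem]
      simp only [Subtype.coe_eta, OrderIso.symm_apply_apply]
    · by_cases hx' : x ∈ D
      · rw [hfD x hx hx']
        have hmem : ((e₂ ⟨x, hx'⟩ : {y // y ∈ B}) : ℤ) ∈ B := (e₂ ⟨x, hx'⟩).2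
        rw [hgB _ (fun h => hAB _ h hmem) hmem]
        simp only [Subtype.coe_eta, OrderIso.symm_apply_apply]
      · rw [hfid x hx hx']
        refine hgid x ?_ ?_
        · intro h
          rw [hAmem] at h
          rcases h with ⟨h1, _⟩ | h1
          · exact hx h1
          · exact hx' (hPD h1)
        · intro h
          rw [hBmem] at h
          rcases h with ⟨h1, _⟩ | h1
          · exact hx' h1
          · exact hx (hMC h1)
  have hfg : ∀ y : ℤ, f (g y) = y := by
    intro y
    by_cases hy : y ∈ A
    · rw [hgA y hy]
      have hmem : ((e₁.symm ⟨y, hy⟩ : {x // x ∈ C}) : ℤ) ∈ C := (e₁.symm ⟨y, hy⟩).2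
      rw [hfC _ hmem]
      simp only [Subtype.coe_eta, OrderIso.apply_symm_apply]
    · by_cases hy' : y ∈ B
      · rw [hgB y hy hy']
        have hmem : ((e₂.symm ⟨y, hy'⟩ : {x // x ∈ D}) : ℤ) ∈ D := (e₂.symm ⟨y, hy'⟩).2
        rw [hfD _ (fun h => hCD _ h hmem) hmem]
        simp only [Subtype.coe_eta, OrderIso.apply_symm_apply]
      · rw [hgid y hy hy']
        refine hfid y ?_ ?_
        · intro h
          have : y ∈ A := by
            rw [hAmem]
            by_cases hM1 : y ∈ M
            · exact absurd (hBmem y |>.2 (Or.inr hM1)) hy'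
            · exact Or.inl ⟨h, hM1⟩
          exact hy this
        · intro h
          have : y ∈ B := by
            rw [hBmem]
            by_cases hP1 : y ∈ P
            · exact absurd (hAmem y |>.2 (Or.inr hP1)) hy
            · exact Or.inl ⟨h, hP1⟩
          exact hy' this
  set w : Equiv.Perm ℤ := ⟨f, g, hgf, hfg⟩ with hwdef
  have hwapp : ∀ x : ℤ, w x = f x := fun x => rfl
  have hwsymm : ∀ x : ℤ, w.symm x = g x := fun x => rfl
  have hfs : FinSupp w := by
    apply Set.Finite.subset ((C ∪ D).finite_toSet)
    intro x hx
    simp only [Set.mem_setOf_eq, hwapp] at hx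
    by_contra h
    simp only [Finset.coe_union, Set.mem_union, Finset.mem_coe, not_or] at h
    exact hx (hfid x h.1 h.2)
  have hstep : ∀ i : ℤ, i ≠ 0 → w i < w (i + 1) := by
    intro i hi
    rw [hwapp, hwapp]
    rcases lt_or_ge i 0 with hneg' | hpos'
    · by_cases hiC : i ∈ C
      · have hi1C : i + 1 ∈ C := by
          rw [hCmem] at hiC ⊢; omega
        rw [hfC i hiC, hfC _ hi1C]
        exact Subtype.coe_lt_coe.2 (e₁.strictMono (Subtype.mk_lt_mk.2 (by omega)))
      · have hiI : i < -N := by rw [hCmem] at hiC; omega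
        have hiD : i ∉ D := by rw [hDmem]; omega
        rw [hfid i hiC hiD]
        by_cases hi1C : i + 1 ∈ C
        · rw [hfC _ hi1C]
          have := (hAbd _ (e₁ ⟨i + 1, hi1C⟩).2).1
          omega
        · have hi1D : i + 1 ∉ D := by rw [hDmem]; omega
          rw [hfid _ hi1C hi1D]; omega
    · have hpos1 : 1 ≤ i := by omega
      by_cases hi1D : i + 1 ∈ D
      · have hiD : i ∈ D := by rw [hDmem] at hi1D ⊢; omega
        rw [hfD i (by rw [hCmem]; omega) hiD, hfD _ (by rw [hCmem]; omega) hi1D]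
        exact Subtype.coe_lt_coe.2 (e₂.strictMono (Subtype.mk_lt_mk.2 (by omega)))
      · have h2 : N < i + 1 := by rw [hDmem] at hi1D; omega
        rw [hfid (i + 1) (by rw [hCmem]; omega) (by rw [hDmem]; omega)]
        by_cases hiD : i ∈ D
        · rw [hfD i (by rw [hCmem]; omega) hiD]
          have := (hBbd _ (e₂ ⟨i, hiD⟩).2).2
          omega
        · rw [hfid i (by rw [hCmem]; omega) hiD]; omega
  refine ⟨w, hfs, (isZG_iff hfs).2 hstep, ?_, ?_⟩
  · ext i
    simp only [Iplus, Set.mem_setOf_eq, hwsymm]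
    constructor
    · rintro ⟨hi, hgi⟩
      by_cases hy : i ∈ A
      · rw [hAmem] at hy
        rcases hy with ⟨h1, _⟩ | h1
        · rw [hCmem] at h1; omega
        · rwa [hPiff] at h1
      · by_cases hy' : i ∈ B
        · rw [hgB i hy hy'] at hgi
          have := (e₂.symm ⟨i, hy'⟩).2
          rw [hDmem] at this; omega
        · rw [hgid i hy hy'] at hgi; omega
    · intro hi
      have hi0 : 0 < i := hpos i hi
      have hiP : i ∈ P := (hPiff i).2 hi
      have hiA : i ∈ A := (hAmem i).2 (Or.inr hiP)
      refine ⟨hi0, ?_⟩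
      rw [hgA i hiA]
      have := (e₁.symm ⟨i, hiA⟩).2
      rw [hCmem] at this; omega
  · ext i
    simp only [Iminus, Set.mem_setOf_eq, hwsymm]
    constructor
    · rintro ⟨hi, hgi⟩
      by_cases hy : i ∈ A
      · rw [hgA i hy] at hgi
        have := (e₁.symm ⟨i, hy⟩).2
        rw [hCmem] at this; omega
      · by_cases hy' : i ∈ B
        · rw [hBmem] at hy'
          rcases hy' with ⟨h1, _⟩ | h1
          · rw [hDmem] at h1; omega
          · rwa [hMiff] at h1
        · rw [hgid i hy hy'] at hgi; omega
    · intro hi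
      have hi0 : i ≤ 0 := hneg i hi
      have hiM : i ∈ M := (hMiff i).2 hi
      have hiB : i ∈ B := (hBmem i).2 (Or.inr hiM)
      have hiA : i ∉ A := fun h => hAB i h hiB
      refine ⟨hi0, ?_⟩
      rw [hgB i hiA hiB]
      have := (e₂.symm ⟨i, hiB⟩).2
      rw [hDmem] at this; omega

/-- The map `w ↦ (I_{w,+}, I_{w,-})` is a bijection from the 0-Grassmannian
permutations of `ℤ` to pairs of finite sets `(I₊, I₋)` with `I₊ ⊆ ℤ_{>0}`,
`I₋ ⊆ ℤ_{≤0}` and `|I₊| = |I₋|`. -/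
theorem grassmannian_to_sets_bijOn :
    Set.BijOn (fun w => (Iplus w, Iminus w))
      {w : Equiv.Perm ℤ | FinSupp w ∧ IsZeroGrassmannian w}
      {p : Set ℤ × Set ℤ | (∀ i ∈ p.1, 0 < i) ∧ (∀ i ∈ p.2, i ≤ 0) ∧
        p.1.Finite ∧ p.2.Finite ∧ Nat.card p.1 = Nat.card p.2} := by
  refine ⟨?_, ?_, ?_⟩
  · rintro w ⟨hfs, hG⟩
    obtain ⟨hf1, hf2, hf3⟩ := card_iplus_eq_iminus hfs
    exact ⟨fun i hi => hi.1, fun i hi => hi.1, hf1, hf2, hf3⟩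
  · rintro w ⟨hfs, hG⟩ w' ⟨hfs', hG'⟩ heq
    simp only [Prod.mk.injEq] at heq
    exact eq_of_same_sets hfs hfs' hG hG' heq.1 heq.2
  · rintro ⟨Ip, Im⟩ ⟨h1, h2, h3, h4, h5⟩
    obtain ⟨w, hfs, hG, hp, hm⟩ := exists_perm Ip Im h1 h2 h3 h4 h5
    exact ⟨w, ⟨hfs, hG⟩, by simp [hp, hm]⟩
end

section
/- For $w \in S_+$, the transition matrix between Schubert polynomials and monomials is unitriangular with respect to reverse-lex order: $\mathfrak{S}_w = x^{c(w)} + (\text{reverse-lex lower terms})$, where $c(w)$ is the code of $w$ and $x^c > x^b$ in reverse-lex order means $b \ne c$ and $b_i < c_i$ for the maximal index $i$ with $b_i \ne c_i$. -/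
open MvPolynomial

/-- The group `S₊` of permutations of `ℕ` moving only finitely many elements
(the positive integers are relabeled `0, 1, 2, …`). -/
def SPlus : Subgroup (Equiv.Perm ℕ) where
  carrier := {w | {i : ℕ | w i ≠ i}.Finite}
  one_mem' := by
    have h : {i : ℕ | (1 : Equiv.Perm ℕ) i ≠ i} = ∅ := by ext i; simp
    show ({i : ℕ | (1 : Equiv.Perm ℕ) i ≠ i}).Finite
    rw [h]; exact Set.finite_empty
  mul_mem' := by
    intro a b ha hb
    show ({i : ℕ | (a * b) i ≠ i}).Finite
    refine (Set.Finite.union ha hb).subset ?_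
    intro j hj
    simp only [Set.mem_setOf_eq] at hj
    by_contra hc
    simp only [Set.mem_union, Set.mem_setOf_eq, not_or, not_not] at hc
    exact hj (by rw [Equiv.Perm.mul_apply, hc.2, hc.1])
  inv_mem' := by
    intro a ha
    show ({i : ℕ | a⁻¹ i ≠ i}).Finite
    have h : {i : ℕ | a⁻¹ i ≠ i} = {i : ℕ | a i ≠ i} := by
      ext i
      simp only [Set.mem_setOf_eq, ne_eq, Equiv.Perm.inv_eq_iff_eq]
      exact not_congr eq_comm
    rw [h]; exact ha

/-- The simple transposition `s_i = (i, i+1)` as an element of `S₊`. -/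
def sN (i : ℕ) : SPlus :=
  ⟨Equiv.swap i (i + 1), by
    show ({j : ℕ | Equiv.swap i (i + 1) j ≠ j}).Finite
    refine ((Set.finite_singleton (i + 1)).insert i).subset ?_
    intro j hj
    simp only [Set.mem_setOf_eq] at hj
    by_contra hc
    simp only [Set.mem_insert_iff, Set.mem_singleton_iff, not_or] at hc
    exact hj (Equiv.swap_apply_of_ne_of_ne hc.1 hc.2)⟩

/-- Coxeter length = number of inversions. -/
noncomputable def lenS (w : SPlus) : ℕ :=
  Nat.card {p : ℕ × ℕ | p.1 < p.2 ∧ (w : Equiv.Perm ℕ) p.2 < (w : Equiv.Perm ℕ) p.1}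

/-- The defining properties of the family of Schubert polynomials `𝔖_w`, `w ∈ S₊`:
`𝔖_id = 1`; `𝔖_w` is homogeneous of degree `ℓ(w)`; and
`A_i 𝔖_w = 𝔖_{w sᵢ}` if `ℓ(w sᵢ) < ℓ(w)` and `A_i 𝔖_w = 0` otherwise, where the
divided difference relations are expressed via
`(x_i - x_{i+1}) 𝔖_{w sᵢ} = 𝔖_w - s_i 𝔖_w` resp. `s_i 𝔖_w = 𝔖_w`. -/
def SchubertFamily (S : SPlus → MvPolynomial ℕ ℚ) : Prop :=
  S 1 = 1 ∧
  (∀ w : SPlus, (S w).IsHomogeneous (lenS w)) ∧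
  (∀ (w : SPlus) (i : ℕ),
    if lenS (w * sN i) < lenS w then
      (X i - X (i + 1)) * S (w * sN i)
        = S w - rename (fun j => Equiv.swap i (i + 1) j) (S w)
    else rename (fun j => Equiv.swap i (i + 1) j) (S w) = S w)

/-- The code of `w`: `c(w)_i = #{j > i | w j < w i}`. -/
noncomputable def codeN (w : Equiv.Perm ℕ) : ℕ → ℕ :=
  fun i => Nat.card {j : ℕ | i < j ∧ w j < w i}

/-- `b` is smaller than `c` in reverse-lex order: at the largest index where
they differ, `b` is smaller. -/
def RevLexLt (b c : ℕ → ℕ) : Prop :=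
  ∃ i, b i < c i ∧ ∀ j, i < j → b j = c j


-- abbreviations for this development
namespace SchubAux

/-- moved-set bound -/
lemma exists_bound (w : Equiv.Perm ℕ) (hw : {i : ℕ | w i ≠ i}.Finite) :
    ∃ N : ℕ, ∀ j, N ≤ j → w j = j := by
  obtain ⟨b, hb⟩ := hw.bddAbove
  refine ⟨b + 1, fun j hj => ?_⟩
  by_contra h
  have : j ∈ {i : ℕ | w i ≠ i} := h
  have := hb this
  omega

lemma fix_lt {w : Equiv.Perm ℕ} {N : ℕ} (hN : ∀ j, N ≤ j → w j = j) {a : ℕ} (ha : a < N) :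
    w a < N := by
  by_contra h
  push_neg at h
  have := hN _ h  -- w (w a) = w a
  have : a = w a := w.injective (by rw [this])
  omega

/-- inversion set -/
def InvSet (w : Equiv.Perm ℕ) : Set (ℕ × ℕ) := {p | p.1 < p.2 ∧ w p.2 < w p.1}

lemma lenS_eq_ncard (w : SPlus) : lenS w = (InvSet (w : Equiv.Perm ℕ)).ncard := by
  rw [lenS, Nat.card_coe_set_eq]; rfl

lemma InvSet_subset {w : Equiv.Perm ℕ} {N : ℕ} (hN : ∀ j, N ≤ j → w j = j) :
    InvSet w ⊆ Set.Iio N ×ˢ Set.Iio N := by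
  rintro ⟨a, b⟩ ⟨hab, hw⟩
  simp only [Set.mem_prod, Set.mem_Iio]
  dsimp only at hab hw
  by_cases haN : a < N
  · have hwa := fix_lt hN haN
    refine ⟨haN, ?_⟩
    by_contra hbN
    push_neg at hbN
    rw [hN b hbN] at hw
    omega
  · push_neg at haN
    have hb : N ≤ b := by omega
    rw [hN a haN, hN b hb] at hw
    omega

lemma InvSet_finite (w : Equiv.Perm ℕ) (hw : {i : ℕ | w i ≠ i}.Finite) :
    (InvSet w).Finite := by
  obtain ⟨N, hN⟩ := exists_bound w hw
  exact (Set.finite_Iio N |>.prod (Set.finite_Iio N)).subset (InvSet_subset hN)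

lemma InvSet_finite' (w : SPlus) : (InvSet (w : Equiv.Perm ℕ)).Finite :=
  InvSet_finite _ w.2

end SchubAux
namespace SchubAux

lemma swap_sorted {i a b : ℕ} (hab : a < b) (hne : (a, b) ≠ (i, i + 1)) :
    Equiv.swap i (i + 1) a < Equiv.swap i (i + 1) b := by
  have h : ¬(a = i ∧ b = i + 1) := by
    intro ⟨h1, h2⟩; exact hne (by rw [h1, h2])
  simp only [Equiv.swap_apply_def]
  split_ifs <;> omega

lemma coe_mul_sN (w : SPlus) (i : ℕ) (a : ℕ) :
    ((w * sN i : SPlus) : Equiv.Perm ℕ) a = (w : Equiv.Perm ℕ) (Equiv.swap i (i + 1) a) := rfl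

lemma swap_swap (i a : ℕ) : Equiv.swap i (i + 1) (Equiv.swap i (i + 1) a) = a :=
  Equiv.swap_apply_self _ _ _

/-- descent: length goes down -/
lemma lenS_descent {w : SPlus} {i : ℕ}
    (h : (w : Equiv.Perm ℕ) (i + 1) < (w : Equiv.Perm ℕ) i) :
    lenS (w * sN i) + 1 = lenS w := by
  have hIw' : InvSet ((w * sN i : SPlus) : Equiv.Perm ℕ)
      = (fun p : ℕ × ℕ => (Equiv.swap i (i+1) p.1, Equiv.swap i (i+1) p.2)) ''
        (InvSet (w : Equiv.Perm ℕ) \ {(i, i + 1)}) := by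
    ext ⟨a, b⟩
    constructor
    · rintro ⟨hab, hinv⟩
      dsimp only at hab hinv
      rw [coe_mul_sN, coe_mul_sN] at hinv
      have hne : (a, b) ≠ (i, i + 1) := by
        rintro h'
        injection h' with h1 h2
        subst h1; subst h2
        rw [Equiv.swap_apply_left, Equiv.swap_apply_right] at hinv
        omega
      have hsort := swap_sorted hab hne
      refine ⟨(Equiv.swap i (i+1) a, Equiv.swap i (i+1) b), ⟨⟨hsort, hinv⟩, ?_⟩, ?_⟩
      · rintro h'
        simp only [Set.mem_singleton_iff, Prod.mk.injEq] at h'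
        have h1 := congrArg (Equiv.swap i (i+1)) h'.1
        have h2 := congrArg (Equiv.swap i (i+1)) h'.2
        rw [swap_swap, Equiv.swap_apply_left] at h1
        rw [swap_swap, Equiv.swap_apply_right] at h2
        omega
      · show (Equiv.swap i (i+1) (Equiv.swap i (i+1) a),
              Equiv.swap i (i+1) (Equiv.swap i (i+1) b)) = (a, b)
        rw [swap_swap, swap_swap]
    · rintro ⟨⟨p, q⟩, ⟨⟨hpq, hinv⟩, hne⟩, hpr⟩
      dsimp only at hpq hinv
      have hne' : (p, q) ≠ (i, i+1) := by
        intro h'; exact hne (h' ▸ Set.mem_singleton _)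
      have hsort := swap_sorted hpq hne'
      have hab : (a, b) = (Equiv.swap i (i+1) p, Equiv.swap i (i+1) q) := hpr.symm
      injection hab with ha hb
      subst ha; subst hb
      refine ⟨hsort, ?_⟩
      show ((w * sN i : SPlus) : Equiv.Perm ℕ) (Equiv.swap i (i+1) q) < _
      rw [coe_mul_sN, coe_mul_sN, swap_swap, swap_swap]
      exact hinv
  have hfin : (InvSet (w : Equiv.Perm ℕ)).Finite := InvSet_finite' w
  have hmem : (i, i+1) ∈ InvSet (w : Equiv.Perm ℕ) := ⟨by omega, h⟩
  have hinj : Function.Injective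
      (fun p : ℕ × ℕ => (Equiv.swap i (i+1) p.1, Equiv.swap i (i+1) p.2)) := by
    intro x y hxy
    simp only [Prod.mk.injEq] at hxy
    have h1 := congrArg (Equiv.swap i (i+1)) hxy.1
    have h2 := congrArg (Equiv.swap i (i+1)) hxy.2
    rw [swap_swap, swap_swap] at h1 h2
    exact Prod.ext h1 h2
  rw [lenS_eq_ncard, lenS_eq_ncard, hIw', Set.ncard_image_of_injective _ hinj,
    Set.ncard_diff_singleton_add_one hmem hfin]

lemma descent_lt {w : SPlus} {i : ℕ}
    (h : (w : Equiv.Perm ℕ) (i + 1) < (w : Equiv.Perm ℕ) i) :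
    lenS (w * sN i) < lenS w := by
  have := lenS_descent h; omega

lemma sN_mul_sN (i : ℕ) : sN i * sN i = 1 := by
  ext j
  show Equiv.swap i (i+1) (Equiv.swap i (i+1) j) = j
  exact Equiv.swap_apply_self _ _ _

lemma ascent_not_lt {w : SPlus} {i : ℕ}
    (h : (w : Equiv.Perm ℕ) i < (w : Equiv.Perm ℕ) (i + 1)) :
    ¬ lenS (w * sN i) < lenS w := by
  have hd : ((w * sN i : SPlus) : Equiv.Perm ℕ) (i + 1)
      < ((w * sN i : SPlus) : Equiv.Perm ℕ) i := by
    rw [coe_mul_sN, coe_mul_sN, Equiv.swap_apply_left, Equiv.swap_apply_right]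
    exact h
  have := lenS_descent hd
  rw [mul_assoc, sN_mul_sN, mul_one] at this
  omega

end SchubAux
namespace SchubAux

def codeSet (w : Equiv.Perm ℕ) (i : ℕ) : Set ℕ := {j | i < j ∧ w j < w i}

lemma codeN_eq (w : Equiv.Perm ℕ) (i : ℕ) : codeN w i = (codeSet w i).ncard := by
  rw [codeN, Nat.card_coe_set_eq]; rfl

lemma codeSet_finite (w : SPlus) (i : ℕ) : (codeSet (w : Equiv.Perm ℕ) i).Finite := by
  obtain ⟨N, hN⟩ := exists_bound _ w.2
  refine (Set.finite_Iio (max N ((w : Equiv.Perm ℕ) i))).subset ?_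
  rintro j ⟨hij, hj⟩
  simp only [Set.mem_Iio]
  by_cases hjN : j < N
  · omega
  · push_neg at hjN
    rw [hN j hjN] at hj
    omega

lemma codeN_eq_zero {w : SPlus} {N : ℕ} (hN : ∀ j, N ≤ j → (w : Equiv.Perm ℕ) j = j)
    {i : ℕ} (hi : N ≤ i) : codeN (w : Equiv.Perm ℕ) i = 0 := by
  rw [codeN_eq]
  convert Set.ncard_empty ℕ
  ext j
  simp only [Set.mem_empty_iff_false, iff_false]
  rintro ⟨hij, hj⟩
  rw [hN i hi, hN j (by omega)] at hj
  omega

/-- the code as a finitely supported function -/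
noncomputable def codeF (w : SPlus) : ℕ →₀ ℕ :=
  Finsupp.ofSupportFinite (codeN (w : Equiv.Perm ℕ)) (by
    obtain ⟨N, hN⟩ := exists_bound _ w.2
    refine (Set.finite_Iio N).subset ?_
    intro i hi
    simp only [Set.mem_Iio]
    by_contra h
    push_neg at h
    exact hi (codeN_eq_zero hN h))

lemma codeF_apply (w : SPlus) (i : ℕ) : codeF w i = codeN (w : Equiv.Perm ℕ) i := by
  rw [codeF]; exact congrFun Finsupp.ofSupportFinite_coe i

lemma swap_gt {i j k : ℕ} (hji : j ≠ i) (hji' : j ≠ i + 1) (hjk : j < k) :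
    j < Equiv.swap i (i + 1) k := by
  simp only [Equiv.swap_apply_def]
  split_ifs <;> omega

/-- code relation off the swap positions -/
lemma code_off {w : SPlus} {i j : ℕ} (hji : j ≠ i) (hji' : j ≠ i + 1) :
    codeN ((w * sN i : SPlus) : Equiv.Perm ℕ) j = codeN (w : Equiv.Perm ℕ) j := by
  rw [codeN_eq, codeN_eq]
  have himg : codeSet ((w * sN i : SPlus) : Equiv.Perm ℕ) j
      = Equiv.swap i (i+1) '' codeSet (w : Equiv.Perm ℕ) j := by
    have hsj : Equiv.swap i (i+1) j = j := Equiv.swap_apply_of_ne_of_ne hji hji'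
    ext m
    constructor
    · rintro ⟨hjm, hm⟩
      rw [coe_mul_sN] at hm
      refine ⟨Equiv.swap i (i+1) m, ⟨swap_gt hji hji' hjm, ?_⟩, swap_swap i m⟩
      rw [coe_mul_sN, hsj] at hm
      exact hm
    · rintro ⟨k, ⟨hjk, hk⟩, hkm⟩
      subst hkm
      refine ⟨swap_gt hji hji' hjk, ?_⟩
      rw [coe_mul_sN, coe_mul_sN, swap_swap, hsj]
      exact hk
  rw [himg, Set.ncard_image_of_injective _ (Equiv.swap i (i+1)).injective]

/-- code at `i` after a descent swap -/
lemma code_at {w : SPlus} {i : ℕ}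
    (h : (w : Equiv.Perm ℕ) (i + 1) < (w : Equiv.Perm ℕ) i) :
    codeN ((w * sN i : SPlus) : Equiv.Perm ℕ) i = codeN (w : Equiv.Perm ℕ) (i + 1) := by
  rw [codeN_eq, codeN_eq]
  congr 1
  ext k
  constructor
  · rintro ⟨hik, hk⟩
    rw [coe_mul_sN, coe_mul_sN, Equiv.swap_apply_left] at hk
    rcases Nat.lt_or_ge (i+1) k with hk' | hk'
    · rw [Equiv.swap_apply_of_ne_of_ne (by omega) (by omega)] at hk
      exact ⟨hk', hk⟩
    · have hki : k = i + 1 := by omega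
      subst hki
      rw [Equiv.swap_apply_right] at hk
      omega
  · rintro ⟨hik, hk⟩
    refine ⟨by omega, ?_⟩
    rw [coe_mul_sN, coe_mul_sN, Equiv.swap_apply_left,
      Equiv.swap_apply_of_ne_of_ne (by omega) (by omega)]
    exact hk

/-- code at `i+1` after a descent swap -/
lemma code_at' {w : SPlus} {i : ℕ}
    (h : (w : Equiv.Perm ℕ) (i + 1) < (w : Equiv.Perm ℕ) i) :
    codeN ((w * sN i : SPlus) : Equiv.Perm ℕ) (i + 1) + 1 = codeN (w : Equiv.Perm ℕ) i := by
  have h1 : codeSet ((w * sN i : SPlus) : Equiv.Perm ℕ) (i+1)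
      = {k | i + 1 < k ∧ (w : Equiv.Perm ℕ) k < (w : Equiv.Perm ℕ) i} := by
    ext k
    constructor
    · rintro ⟨hik, hk⟩
      rw [coe_mul_sN, coe_mul_sN, Equiv.swap_apply_right,
        Equiv.swap_apply_of_ne_of_ne (by omega) (by omega)] at hk
      exact ⟨hik, hk⟩
    · rintro ⟨hik, hk⟩
      refine ⟨hik, ?_⟩
      rw [coe_mul_sN, coe_mul_sN, Equiv.swap_apply_right,
        Equiv.swap_apply_of_ne_of_ne (by omega) (by omega)]
      exact hk
  have h2 : codeSet (w : Equiv.Perm ℕ) i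
      = insert (i+1) {k | i + 1 < k ∧ (w : Equiv.Perm ℕ) k < (w : Equiv.Perm ℕ) i} := by
    ext k
    simp only [Set.mem_insert_iff, Set.mem_setOf_eq]
    constructor
    · rintro ⟨hik, hk⟩
      rcases Nat.lt_or_ge (i+1) k with hk' | hk'
      · exact Or.inr ⟨hk', hk⟩
      · exact Or.inl (by omega)
    · rintro (hk | ⟨hik, hk⟩)
      · subst hk; exact ⟨by omega, h⟩
      · exact ⟨by omega, hk⟩
  have hfin : ({k | i + 1 < k ∧ (w : Equiv.Perm ℕ) k < (w : Equiv.Perm ℕ) i}).Finite := by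
    refine (codeSet_finite w i).subset ?_
    rintro k ⟨hik, hk⟩
    exact ⟨by omega, hk⟩
  rw [codeN_eq, codeN_eq, h1, h2, Set.ncard_insert_of_notMem (by simp) hfin]

/-- descent means strict descent of the code -/
lemma code_descent {w : SPlus} {i : ℕ}
    (h : (w : Equiv.Perm ℕ) (i + 1) < (w : Equiv.Perm ℕ) i) :
    codeN (w : Equiv.Perm ℕ) (i + 1) < codeN (w : Equiv.Perm ℕ) i := by
  rw [← code_at' h]
  have hsub : codeSet (w : Equiv.Perm ℕ) (i+1)
      ⊆ codeSet ((w * sN i : SPlus) : Equiv.Perm ℕ) (i+1) := by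
    rintro k ⟨hik, hk⟩
    refine ⟨hik, ?_⟩
    rw [coe_mul_sN, coe_mul_sN, Equiv.swap_apply_right,
      Equiv.swap_apply_of_ne_of_ne (by omega) (by omega)]
    omega
  have := Set.ncard_le_ncard hsub (codeSet_finite (w * sN i) (i+1))
  rw [codeN_eq, codeN_eq]
  omega

/-- a permutation with no descent is the identity -/
lemma eq_one_of_no_descent {w : SPlus}
    (h : ∀ i, ¬ (w : Equiv.Perm ℕ) (i + 1) < (w : Equiv.Perm ℕ) i) : w = 1 := by
  have hmono : StrictMono (w : Equiv.Perm ℕ) := by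
    apply strictMono_nat_of_lt_succ
    intro n
    have hne : (w : Equiv.Perm ℕ) n ≠ (w : Equiv.Perm ℕ) (n + 1) :=
      fun he => by have := (w : Equiv.Perm ℕ).injective he; omega
    have := h n
    omega
  have hid : ∀ a, (w : Equiv.Perm ℕ) a = a := by
    intro a
    have h1 : a ≤ (w : Equiv.Perm ℕ) a := hmono.le_apply
    have hmono' : StrictMono ((w : Equiv.Perm ℕ).symm) := by
      intro x y hxy
      rcases Nat.lt_trichotomy ((w : Equiv.Perm ℕ).symm x) ((w : Equiv.Perm ℕ).symm y) with
        hlt | heq | hgt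
      · exact hlt
      · exfalso
        have : x = y := by
          have := congrArg (w : Equiv.Perm ℕ) heq
          simpa using this
        omega
      · exfalso
        have := hmono hgt
        simp only [Equiv.apply_symm_apply] at this
        omega
    have h2 : (w : Equiv.Perm ℕ) a ≤ (w : Equiv.Perm ℕ).symm ((w : Equiv.Perm ℕ) a) :=
      hmono'.le_apply
    rw [Equiv.symm_apply_apply] at h2
    omega
  ext j
  exact hid j

lemma codeF_one : codeF 1 = 0 := by
  ext i
  rw [codeF_apply]
  simp only [Finsupp.coe_zero, Pi.zero_apply]
  rw [codeN_eq]
  convert Set.ncard_empty ℕ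
  ext j
  simp only [Set.mem_empty_iff_false, iff_false]
  rintro ⟨h1, h2⟩
  simp only [OneMemClass.coe_one, Equiv.Perm.coe_one, id_eq] at h2
  omega

end SchubAux
namespace SchubAux

/-- sum of the entries with index `≥ t` -/
noncomputable def tail (t : ℕ) (f : ℕ →₀ ℕ) : ℕ :=
  f.sum fun j v => if t ≤ j then v else 0

lemma tail_add (t : ℕ) (f g : ℕ →₀ ℕ) : tail t (f + g) = tail t f + tail t g := by
  unfold tail
  exact Finsupp.sum_add_index' (fun i => by simp) (fun i b₁ b₂ => by split_ifs <;> simp)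

lemma tail_single (t p v : ℕ) : tail t (Finsupp.single p v) = if t ≤ p then v else 0 := by
  unfold tail
  exact Finsupp.sum_single_index (by simp)

lemma tail_erase (t p : ℕ) (f : ℕ →₀ ℕ) :
    tail t f = tail t (f.erase p) + (if t ≤ p then f p else 0) := by
  conv_lhs => rw [← Finsupp.erase_add_single p f]
  rw [tail_add, tail_single]

lemma tail_congr {t : ℕ} {f g : ℕ →₀ ℕ} (h : ∀ j, t ≤ j → f j = g j) :
    tail t f = tail t g := by
  unfold tail
  rw [Finsupp.sum_of_support_subset f (Finset.subset_union_left (s₂ := g.support))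
    _ (fun i _ => by simp),
    Finsupp.sum_of_support_subset g (Finset.subset_union_right (s₁ := f.support))
    _ (fun i _ => by simp)]
  refine Finset.sum_congr rfl fun j _ => ?_
  by_cases hj : t ≤ j
  · simp only [if_pos hj, h j hj]
  · simp only [if_neg hj]

lemma apply_le_tail {t j : ℕ} (f : ℕ →₀ ℕ) (h : t ≤ j) : f j ≤ tail t f := by
  by_cases hj : j ∈ f.support
  · unfold tail Finsupp.sum
    have : (if t ≤ j then f j else 0) = f j := if_pos h
    calc f j = (if t ≤ j then f j else 0) := this.symm
    _ ≤ ∑ i ∈ f.support, (if t ≤ i then f i else 0) :=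
        Finset.single_le_sum (f := fun i => if t ≤ i then f i else 0)
          (fun i _ => Nat.zero_le _) hj
  · simp only [Finsupp.mem_support_iff, not_not] at hj
    rw [hj]
    exact Nat.zero_le _

lemma tail_shift {t : ℕ} {f : ℕ →₀ ℕ} (h : f t = 0) : tail t f = tail (t + 1) f := by
  unfold tail
  refine Finsupp.sum_congr fun j hj => ?_
  have : j ≠ t := fun he => by
    rw [he] at hj; exact (Finsupp.mem_support_iff.mp hj) h
  show (if t ≤ j then f j else 0) = if t + 1 ≤ j then f j else 0
  by_cases h2 : t + 1 ≤ j
  · rw [if_pos (by omega), if_pos h2]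
  · rw [if_neg (by omega), if_neg h2]

lemma tail_eq_apply_add (t : ℕ) (f : ℕ →₀ ℕ) : tail t f = f t + tail (t + 1) f := by
  have h1 : tail (t+1) f = tail (t+1) (f.erase t) := by
    rw [tail_erase (t+1) t f, if_neg (by omega), add_zero]
  rw [tail_erase t t f, if_pos (le_refl t),
    tail_shift (f := f.erase t) (Finsupp.erase_same), ← h1, add_comm]

lemma exists_pos_of_tail_pos {t : ℕ} {f : ℕ →₀ ℕ} (h : 0 < tail t f) :
    ∃ j, t ≤ j ∧ f j ≠ 0 := by
  by_contra hc
  push_neg at hc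
  have : tail t f = 0 := by
    unfold tail Finsupp.sum
    refine Finset.sum_eq_zero fun j _ => ?_
    show (if t ≤ j then f j else 0) = 0
    by_cases hj : t ≤ j
    · rw [if_pos hj, hc j hj]
    · rw [if_neg hj]
  omega

lemma mapDomain_swap_apply (p q : ℕ) (f : ℕ →₀ ℕ) (a : ℕ) :
    Finsupp.mapDomain (Equiv.swap p q) f a = f (Equiv.swap p q a) := by
  conv_lhs => rw [show a = Equiv.swap p q (Equiv.swap p q a) from (Equiv.swap_apply_self _ _ _).symm]
  exact Finsupp.mapDomain_apply (Equiv.swap p q).injective f _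

lemma mapDomain_swap_swap (p q : ℕ) (f : ℕ →₀ ℕ) :
    Finsupp.mapDomain (Equiv.swap p q) (Finsupp.mapDomain (Equiv.swap p q) f) = f := by
  ext a
  rw [mapDomain_swap_apply, mapDomain_swap_apply, Equiv.swap_apply_self]

lemma tail_mapDomain_swap {t p : ℕ} (htp : t ≤ p) (f : ℕ →₀ ℕ) :
    tail t (Finsupp.mapDomain (Equiv.swap p (p + 1)) f) = tail t f := by
  unfold tail
  rw [Finsupp.sum_mapDomain_index (fun a => by simp) (fun a b₁ b₂ => by split_ifs <;> simp)]
  refine Finsupp.sum_congr fun j _ => ?_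
  show (if t ≤ Equiv.swap p (p+1) j then f j else 0) = if t ≤ j then f j else 0
  have hiff : t ≤ Equiv.swap p (p+1) j ↔ t ≤ j := by
    simp only [Equiv.swap_apply_def]
    split_ifs <;> omega
  by_cases hj : t ≤ j
  · rw [if_pos (hiff.mpr hj), if_pos hj]
  · rw [if_neg (fun hh => hj (hiff.mp hh)), if_neg hj]

lemma mapDomain_swap_of_apply_eq_zero {p : ℕ} {f : ℕ →₀ ℕ}
    (h1 : f p = 0) (h2 : f (p + 1) = 0) :
    Finsupp.mapDomain (Equiv.swap p (p + 1)) f = f := by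
  ext a
  rw [mapDomain_swap_apply]
  rcases Nat.lt_trichotomy a p with h | h | h
  · rw [Equiv.swap_apply_of_ne_of_ne (by omega) (by omega)]
  · subst h; rw [Equiv.swap_apply_left, h1, h2]
  · rcases Nat.eq_or_lt_of_le h with h' | h'
    · rw [← h', Equiv.swap_apply_right, h1, h2]
    · rw [Equiv.swap_apply_of_ne_of_ne (by omega) (by omega)]

end SchubAux
namespace SchubAux

/-- tails of the code drop by exactly one under a descent swap, for `t ≤ i` -/
lemma tail_code_descent {w : SPlus} {i t : ℕ}
    (h : (w : Equiv.Perm ℕ) (i + 1) < (w : Equiv.Perm ℕ) i) (ht : t ≤ i) :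
    tail t (codeF (w * sN i)) + 1 = tail t (codeF w) := by
  have hc := tail_erase t i (codeF w)
  have hc2 := tail_erase t (i+1) ((codeF w).erase i)
  have hc' := tail_erase t i (codeF (w * sN i))
  have hc2' := tail_erase t (i+1) ((codeF (w * sN i)).erase i)
  rw [if_pos ht] at hc hc'
  rw [if_pos (by omega : t ≤ i + 1)] at hc2 hc2'
  rw [Finsupp.erase_ne (by omega : (i:ℕ)+1 ≠ i)] at hc2 hc2'
  have hEE : tail t (((codeF w).erase i).erase (i+1))
      = tail t (((codeF (w * sN i)).erase i).erase (i+1)) := by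
    refine tail_congr fun j _ => ?_
    by_cases hji : j = i
    · rw [hji, Finsupp.erase_ne (by omega : i ≠ i + 1), Finsupp.erase_same,
        Finsupp.erase_ne (by omega : i ≠ i + 1), Finsupp.erase_same]
    · by_cases hji' : j = i + 1
      · rw [hji', Finsupp.erase_same, Finsupp.erase_same]
      · rw [Finsupp.erase_ne hji', Finsupp.erase_ne hji, Finsupp.erase_ne hji',
          Finsupp.erase_ne hji, codeF_apply, codeF_apply, code_off hji hji']
  have e1 : codeF (w * sN i) i = codeF w (i + 1) := by
    rw [codeF_apply, codeF_apply, code_at h]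
  have e2 : codeF (w * sN i) (i + 1) + 1 = codeF w i := by
    rw [codeF_apply, codeF_apply, code_at' h]
  omega

/-- the total sum of the code equals the length -/
lemma tail_zero_codeF (w : SPlus) : tail 0 (codeF w) = lenS w := by
  obtain ⟨N, hN⟩ := exists_bound _ w.2
  -- finset versions
  have hinv : InvSet (w : Equiv.Perm ℕ)
      = ↑((Finset.range N ×ˢ Finset.range N).filter
          (fun p => p.1 < p.2 ∧ (w : Equiv.Perm ℕ) p.2 < (w : Equiv.Perm ℕ) p.1)) := by
    ext p
    simp only [Finset.coe_filter, Finset.mem_product, Finset.mem_range, Set.mem_setOf_eq]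
    constructor
    · intro hp
      have := InvSet_subset hN hp
      simp only [Set.mem_prod, Set.mem_Iio] at this
      exact ⟨⟨this.1, this.2⟩, hp⟩
    · exact fun hp => hp.2
  have hcode : ∀ i, i < N → codeSet (w : Equiv.Perm ℕ) i
      = ↑((Finset.range N).filter
          (fun j => i < j ∧ (w : Equiv.Perm ℕ) j < (w : Equiv.Perm ℕ) i)) := by
    intro i hiN
    ext j
    simp only [Finset.coe_filter, Finset.mem_range, Set.mem_setOf_eq]
    constructor
    · rintro ⟨hij, hj⟩
      refine ⟨?_, hij, hj⟩
      by_contra hjN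
      push_neg at hjN
      rw [hN j hjN] at hj
      have := fix_lt hN hiN
      omega
    · exact fun hp => hp.2
  -- tail 0 as a sum over range N
  have htail : tail 0 (codeF w) = ∑ i ∈ Finset.range N, codeN (w : Equiv.Perm ℕ) i := by
    unfold tail
    rw [Finsupp.sum_of_support_subset (codeF w) ?hsub _ (fun i _ => by simp)]
    · refine Finset.sum_congr rfl fun i _ => ?_
      rw [if_pos (Nat.zero_le i), codeF_apply]
    case hsub =>
      intro i hi
      simp only [Finset.mem_range]
      by_contra hiN
      push_neg at hiN
      exact (Finsupp.mem_support_iff.mp hi) (by rw [codeF_apply]; exact codeN_eq_zero hN hiN)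
  rw [htail, lenS_eq_ncard, hinv, Set.ncard_coe_finset]
  rw [Finset.card_eq_sum_card_fiberwise
    (f := Prod.fst) (t := Finset.range N)
    (fun p hp => by
      simp only [Finset.mem_coe, Finset.mem_filter, Finset.mem_product, Finset.mem_range] at hp
      exact Finset.mem_range.mpr hp.1.1)]
  refine (Finset.sum_congr rfl fun i hi => ?_).symm
  rw [codeN_eq, hcode i (Finset.mem_range.mp hi), Set.ncard_coe_finset]
  apply Finset.card_bij' (i := fun (p : ℕ × ℕ) _ => p.2) (j := fun j _ => ((i, j) : ℕ × ℕ))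
  · intro p hp
    simp only [Finset.mem_filter, Finset.mem_product, Finset.mem_range] at hp ⊢
    obtain ⟨⟨⟨h1, h2⟩, h3, h4⟩, h5⟩ := hp
    subst h5
    exact ⟨h2, h3, h4⟩
  · intro j hj
    simp only [Finset.mem_filter, Finset.mem_range] at hj ⊢
    simp only [Finset.mem_product, Finset.mem_range]
    refine ⟨⟨⟨?_, hj.1⟩, hj.2.1, hj.2.2⟩, trivial⟩
    have := fix_lt hN (a := i) (Finset.mem_range.mp hi)
    omega
  · intro p hp
    simp only [Finset.mem_filter] at hp
    rw [← hp.2]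
  · intro j hj; rfl

end SchubAux
namespace SchubAux

open MvPolynomial

lemma swc_sub_single {w : SPlus} {i : ℕ}
    (h : (w : Equiv.Perm ℕ) (i + 1) < (w : Equiv.Perm ℕ) i) :
    Finsupp.mapDomain (Equiv.swap i (i+1)) (codeF w) - Finsupp.single (i+1) 1
      = codeF (w * sN i) := by
  ext j
  rw [Finsupp.tsub_apply, mapDomain_swap_apply, Finsupp.single_apply]
  rcases Nat.lt_trichotomy j i with hj | hj | hj
  · rw [Equiv.swap_apply_of_ne_of_ne (by omega) (by omega), if_neg (by omega), Nat.sub_zero,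
      codeF_apply, codeF_apply, code_off (by omega) (by omega)]
  · subst hj
    rw [Equiv.swap_apply_left, if_neg (by omega), Nat.sub_zero,
      codeF_apply, codeF_apply, code_at h]
  · rcases Nat.eq_or_lt_of_le hj with hj' | hj'
    · rw [← hj', Equiv.swap_apply_right, if_pos rfl, codeF_apply, codeF_apply]
      have := code_at' h
      simp only [Nat.succ_eq_add_one]
      omega
    · rw [Equiv.swap_apply_of_ne_of_ne (by omega) (by omega), if_neg (by omega), Nat.sub_zero,
        codeF_apply, codeF_apply, code_off (by omega) (by omega)]

theorem key (S : SPlus → MvPolynomial ℕ ℚ) (hS : SchubertFamily S) :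
    ∀ n (w : SPlus), lenS w = n →
      ((∀ t, 1 ≤ t → ∀ m : ℕ →₀ ℕ, coeff m (S w) ≠ 0 → tail t m ≤ tail t (codeF w)) ∧
       coeff (codeF w) (S w) = 1) := by
  intro n
  induction n using Nat.strong_induction_on with
  | _ n IH =>
  intro w hw
  by_cases hdesc : ∃ i, (w : Equiv.Perm ℕ) (i+1) < (w : Equiv.Perm ℕ) i
  case neg =>
    have hw1 : w = 1 := eq_one_of_no_descent (not_exists.mp hdesc)
    subst hw1
    rw [hS.1, codeF_one]
    constructor
    · intro t ht m hm
      have hm0 : m = 0 := by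
        by_contra hm0
        rw [MvPolynomial.coeff_one, if_neg (fun hh => hm0 hh.symm)] at hm
        exact hm rfl
      rw [hm0]
    · exact MvPolynomial.coeff_zero_one
  case pos =>
  obtain ⟨i, hi⟩ := hdesc
  have part1 : ∀ t, 1 ≤ t → ∀ m : ℕ →₀ ℕ, coeff m (S w) ≠ 0 → tail t m ≤ tail t (codeF w) := by
    intro t ht m hm
    by_contra hgt
    push_neg at hgt
    -- coefficients are invariant under high swaps above the code's tail level
    have key_swap : ∀ p, t ≤ p → ∀ nn : ℕ →₀ ℕ, tail t (codeF w) < tail t nn →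
        coeff nn (S w) = coeff (Finsupp.mapDomain (Equiv.swap p (p+1)) nn) (S w) := by
      intro p hp nn hnn
      have hrel := hS.2.2 w p
      rcases Nat.lt_trichotomy ((w : Equiv.Perm ℕ) p) ((w : Equiv.Perm ℕ) (p+1)) with
        hasc | heq | hdes
      · rw [if_neg (ascent_not_lt hasc)] at hrel
        have hco := coeff_rename_mapDomain (fun j => Equiv.swap p (p+1) j)
          (Equiv.swap p (p+1)).injective (S w) (Finsupp.mapDomain (Equiv.swap p (p+1)) nn)
        rw [hrel] at hco
        rw [mapDomain_swap_swap] at hco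
        exact hco
      · exact absurd ((w : Equiv.Perm ℕ).injective heq) (by omega)
      · rw [if_pos (descent_lt hdes)] at hrel
        have hL : coeff nn ((X p - X (p+1)) * S (w * sN p)) = 0 := by
          have hlem : ∀ q, t ≤ q → q = p ∨ q = p + 1 →
              coeff nn (S (w * sN p) * X q) = 0 := by
            intro q hq hqp
            rw [coeff_mul_X']
            split_ifs with hmem
            · by_contra hne
              have hIH := (IH (lenS (w * sN p)) (by rw [← hw]; exact descent_lt hdes)
                (w * sN p) rfl).1 t ht _ hne
              have hnnq : nn q ≠ 0 := Finsupp.mem_support_iff.mp hmem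
              have hsum : nn = (nn - Finsupp.single q 1) + Finsupp.single q 1 := by
                ext a
                rw [Finsupp.add_apply, Finsupp.tsub_apply, Finsupp.single_apply]
                by_cases haq : q = a
                · subst haq
                  rw [if_pos rfl]
                  omega
                · rw [if_neg haq]
                  omega
              have htt : tail t nn = tail t (nn - Finsupp.single q 1) + 1 := by
                conv_lhs => rw [hsum]
                rw [tail_add, tail_single, if_pos hq]
              have hcd := tail_code_descent hdes hp
              omega
            · rfl
          rw [sub_mul, coeff_sub,
            mul_comm ((X p : MvPolynomial ℕ ℚ)) _, mul_comm ((X (p+1) : MvPolynomial ℕ ℚ)) _,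
            hlem p hp (Or.inl rfl), hlem (p+1) (by omega) (Or.inr rfl), sub_zero]
        have hren : coeff nn (rename (fun j => Equiv.swap p (p+1) j) (S w))
            = coeff (Finsupp.mapDomain (Equiv.swap p (p+1)) nn) (S w) := by
          have hco := coeff_rename_mapDomain (fun j => Equiv.swap p (p+1) j)
            (Equiv.swap p (p+1)).injective (S w) (Finsupp.mapDomain (Equiv.swap p (p+1)) nn)
          rw [mapDomain_swap_swap] at hco
          exact hco
        have hco := congrArg (coeff nn) hrel
        rw [hL, coeff_sub, hren] at hco
        exact sub_eq_zero.mp hco.symm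
    -- the infinite family of monomials
    have htm : 0 < tail t m := lt_of_le_of_lt (Nat.zero_le _) hgt
    obtain ⟨j₀, hj₀t, hj₀⟩ := exists_pos_of_tail_pos htm
    have hsupp : j₀ ∈ m.support := Finsupp.mem_support_iff.mpr hj₀
    have hne : m.support.Nonempty := ⟨j₀, hsupp⟩
    set r := m.support.max' hne with hr
    have hrt : t ≤ r := le_trans hj₀t (m.support.le_max' j₀ hsupp)
    have hrmem : m r ≠ 0 := Finsupp.mem_support_iff.mp (m.support.max'_mem hne)
    have hrtop : ∀ j, r < j → m j = 0 := by
      intro j hj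
      by_contra h
      exact absurd (m.support.le_max' j (Finsupp.mem_support_iff.mpr h)) (by omega)
    have herase0 : ∀ j, r ≤ j → (m.erase r) j = 0 := by
      intro j hj
      rcases Nat.eq_or_lt_of_le hj with h | h
      · rw [← h, Finsupp.erase_same]
      · rw [Finsupp.erase_ne (by omega)]; exact hrtop j h
    set g : ℕ → (ℕ →₀ ℕ) := fun k => m.erase r + Finsupp.single (r + k) (m r) with hg
    have hg0 : g 0 = m := by
      rw [hg]
      simp only [Nat.add_zero]
      exact Finsupp.erase_add_single r m
    have hgstep : ∀ k, g (k+1) = Finsupp.mapDomain (Equiv.swap (r+k) (r+k+1)) (g k) := by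
      intro k
      rw [hg]
      simp only
      rw [Finsupp.mapDomain_add, Finsupp.mapDomain_single,
        mapDomain_swap_of_apply_eq_zero (herase0 _ (by omega)) (herase0 _ (by omega)),
        Equiv.swap_apply_left]
      rfl
    have hgtail : ∀ k, tail t (g k) = tail t m := by
      intro k
      rw [hg]
      simp only
      rw [tail_add, tail_single, if_pos (by omega)]
      conv_rhs => rw [tail_erase t r m, if_pos hrt]
    have hgcoeff : ∀ k, coeff (g k) (S w) = coeff m (S w) := by
      intro k
      induction k with
      | zero => rw [hg0]
      | succ k ih =>
        rw [hgstep k, ← key_swap (r+k) (by omega) (g k) (by rw [hgtail]; exact hgt), ih]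
    have hginj : Function.Injective g := by
      intro k k' hkk
      by_contra hne'
      have h1 : g k (r+k) = m r := by
        show (Finsupp.erase r m + Finsupp.single (r + k) (m r)) (r+k) = m r
        rw [Finsupp.add_apply, Finsupp.single_apply, if_pos rfl, herase0 _ (by omega),
          Nat.zero_add]
      have h2 : g k' (r+k) = 0 := by
        show (Finsupp.erase r m + Finsupp.single (r + k') (m r)) (r+k) = 0
        rw [Finsupp.add_apply, Finsupp.single_apply, if_neg (by omega), herase0 _ (by omega),
          Nat.zero_add]
      rw [hkk] at h1
      rw [h1] at h2
      exact hrmem h2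
    have hmemg : ∀ k, g k ∈ ((S w).support : Set (ℕ →₀ ℕ)) := by
      intro k
      simp only [Finset.mem_coe, MvPolynomial.mem_support_iff]
      rw [hgcoeff]
      exact hm
    exact absurd (Set.infinite_of_injective_forall_mem hginj hmemg)
      (Finset.finite_toSet _).not_infinite
  refine ⟨part1, ?_⟩
  -- part 2 : the leading coefficient
  have hrel := hS.2.2 w i
  rw [if_pos (descent_lt hi)] at hrel
  have hIH := IH (lenS (w * sN i)) (by rw [← hw]; exact descent_lt hi) (w * sN i) rfl
  have hcdes : codeN (w : Equiv.Perm ℕ) (i+1) < codeN (w : Equiv.Perm ℕ) i := code_descent hi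
  have hswc_apply : ∀ j, Finsupp.mapDomain (Equiv.swap i (i+1)) (codeF w) j
      = codeF w (Equiv.swap i (i+1) j) := fun j => mapDomain_swap_apply _ _ _ j
  have hswc_i1 : Finsupp.mapDomain (Equiv.swap i (i+1)) (codeF w) (i+1) = codeF w i := by
    rw [hswc_apply, Equiv.swap_apply_right]
  have tail_swc : tail (i+1) (Finsupp.mapDomain (Equiv.swap i (i+1)) (codeF w))
      = codeF w i + tail (i+2) (codeF w) := by
    rw [tail_eq_apply_add, hswc_i1]
    congr 1
    refine tail_congr fun j hj => ?_
    rw [hswc_apply, Equiv.swap_apply_of_ne_of_ne (by omega) (by omega)]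
  have tail_c : tail (i+1) (codeF w) = codeF w (i+1) + tail (i+2) (codeF w) :=
    tail_eq_apply_add _ _
  have hswc0 : coeff (Finsupp.mapDomain (Equiv.swap i (i+1)) (codeF w)) (S w) = 0 := by
    by_contra h
    have h1 := part1 (i+1) (by omega) _ h
    rw [tail_swc, tail_c, codeF_apply, codeF_apply] at h1
    omega
  have hren : coeff (Finsupp.mapDomain (Equiv.swap i (i+1)) (codeF w))
      (rename (fun j => Equiv.swap i (i+1) j) (S w)) = coeff (codeF w) (S w) :=
    coeff_rename_mapDomain _ (Equiv.swap i (i+1)).injective _ _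
  have hXi1 : coeff (Finsupp.mapDomain (Equiv.swap i (i+1)) (codeF w))
      (S (w * sN i) * X (i+1)) = 1 := by
    rw [coeff_mul_X', if_pos ?memi]
    · rw [swc_sub_single hi]
      exact hIH.2
    case memi =>
      rw [Finsupp.mem_support_iff, hswc_i1, codeF_apply]
      omega
  have hXi : coeff (Finsupp.mapDomain (Equiv.swap i (i+1)) (codeF w))
      (S (w * sN i) * X i) = 0 := by
    rw [coeff_mul_X']
    split_ifs with hmem
    · by_contra h
      have hIH1 := hIH.1 (i+1) (by omega) _ h
      have he1 : tail (i+1) (Finsupp.mapDomain (Equiv.swap i (i+1)) (codeF w)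
            - Finsupp.single i 1)
          = tail (i+1) (Finsupp.mapDomain (Equiv.swap i (i+1)) (codeF w)) := by
        refine tail_congr fun j hj => ?_
        rw [Finsupp.tsub_apply, Finsupp.single_apply, if_neg (by omega), Nat.sub_zero]
      have he2 : tail (i+1) (codeF (w * sN i))
          = codeF (w * sN i) (i+1) + tail (i+2) (codeF (w * sN i)) := tail_eq_apply_add _ _
      have he3 : tail (i+2) (codeF (w * sN i)) = tail (i+2) (codeF w) := by
        refine tail_congr fun j hj => ?_
        rw [codeF_apply, codeF_apply, code_off (by omega) (by omega)]
      have he4 : codeF (w * sN i) (i+1) + 1 = codeF w i := by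
        rw [codeF_apply, codeF_apply]
        exact code_at' hi
      rw [he1, tail_swc] at hIH1
      rw [he2, he3] at hIH1
      omega
    · rfl
  have hL : coeff (Finsupp.mapDomain (Equiv.swap i (i+1)) (codeF w))
      ((X i - X (i+1)) * S (w * sN i)) = -1 := by
    rw [sub_mul, coeff_sub, mul_comm ((X i : MvPolynomial ℕ ℚ)) _,
      mul_comm ((X (i+1) : MvPolynomial ℕ ℚ)) _, hXi, hXi1]
    norm_num
  have hco := congrArg (coeff (Finsupp.mapDomain (Equiv.swap i (i+1)) (codeF w))) hrel
  rw [hL, coeff_sub, hren, hswc0] at hco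
  linarith

end SchubAux
open SchubAux in
/-- The transition matrix between Schubert polynomials and monomials is
unitriangular: `𝔖_w = x^{c(w)} +` reverse-lex lower terms. -/
theorem schubert_monomial_unitriangular
    (S : SPlus → MvPolynomial ℕ ℚ) (hS : SchubertFamily S) (w : SPlus) :
    (∀ m : ℕ →₀ ℕ, (∀ i, m i = codeN (w : Equiv.Perm ℕ) i) → coeff m (S w) = 1) ∧
    (∀ m : ℕ →₀ ℕ, coeff m (S w) ≠ 0 →
      (∀ i, m i = codeN (w : Equiv.Perm ℕ) i) ∨
        RevLexLt m (codeN (w : Equiv.Perm ℕ))) := by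
  obtain ⟨part1, part2⟩ := SchubAux.key S hS (lenS w) w rfl
  constructor
  · intro m hmc
    have hmeq : m = codeF w := by
      ext j
      rw [codeF_apply]
      exact hmc j
    rw [hmeq]
    exact part2
  · intro m hm
    by_cases hall : ∀ i, m i = codeN (w : Equiv.Perm ℕ) i
    · exact Or.inl hall
    · right
      push_neg at hall
      obtain ⟨j₀, hj₀⟩ := hall
      have hmemD : ∀ j, m j ≠ codeF w j →
          j ∈ (m.support ∪ (codeF w).support).filter (fun j => m j ≠ codeF w j) := by
        intro j hj
        rw [Finset.mem_filter, Finset.mem_union]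
        refine ⟨?_, hj⟩
        by_cases h1 : m j = 0
        · right
          rw [Finsupp.mem_support_iff]
          intro h2
          exact hj (by rw [h1, h2])
        · left
          exact Finsupp.mem_support_iff.mpr h1
      have hneD : ((m.support ∪ (codeF w).support).filter
          (fun j => m j ≠ codeF w j)).Nonempty :=
        ⟨j₀, hmemD j₀ (by rw [codeF_apply]; exact hj₀)⟩
      have hiD := Finset.max'_mem _ hneD
      have hineq : m (((m.support ∪ (codeF w).support).filter
          (fun j => m j ≠ codeF w j)).max' hneD)
          ≠ codeF w (((m.support ∪ (codeF w).support).filter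
          (fun j => m j ≠ codeF w j)).max' hneD) := (Finset.mem_filter.mp hiD).2
      set i := ((m.support ∪ (codeF w).support).filter
          (fun j => m j ≠ codeF w j)).max' hneD with hidef
      have habove : ∀ j, i < j → m j = codeF w j := by
        intro j hj
        by_contra h
        exact absurd (Finset.le_max' _ j (hmemD j h)) (by omega)
      refine ⟨i, ?_, fun j hj => by rw [habove j hj, codeF_apply]⟩
      rw [show codeN (w : Equiv.Perm ℕ) i = codeF w i from (codeF_apply w i).symm]
      have e3 : tail (i+1) m = tail (i+1) (codeF w) :=
        tail_congr (fun j hj => habove j (by omega))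
      have e1 := tail_eq_apply_add i m
      have e2 := tail_eq_apply_add i (codeF w)
      rcases Nat.eq_zero_or_pos i with hi0 | hipos
      · -- use homogeneity and the total degree of the code
        have hdeg : tail 0 m = lenS w := by
          have hhom := hS.2.1 w hm
          rw [← hhom]
          unfold tail
          rw [Finsupp.weight_apply]
          refine Finsupp.sum_congr fun j _ => ?_
          rw [if_pos (Nat.zero_le j), smul_eq_mul, Pi.one_apply, mul_one]
        have hdegc : tail 0 (codeF w) = lenS w := tail_zero_codeF w
        rw [hi0] at e1 e2 e3 hineq ⊢
        omega
      · have h1 := part1 i hipos m hm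
        omega
end
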